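/- arXiv:2511.17878 — 3 statements merged into one kernel-verified Lean document; each statement's English description precedes it below -/
import Mathlib

section
/- E[‖Y_ISI‖_F²] = (M−1)·Σ_{q=Q̃+1}^{Q} (l_q − N_cp)·P_q, where ‖·‖_F denotes the Frobenius norm. -/
open MeasureTheory ProbabilityTheory Complex Finset Matrix


lemma aux_iIndepFun_ae_eq {Ω ι : Type*} {mΩ : MeasurableSpace Ω} {μ : Measure Ω}
    {β : ι → Type*} {m : ∀ i, MeasurableSpace (β i)} {f f' : ∀ i, Ω → β i}
    (hf : iIndepFun f μ) (h : ∀ i, f i =ᵐ[μ] f' i) : iIndepFun f' μ := by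
  rw [iIndepFun_iff_measure_inter_preimage_eq_mul] at hf ⊢
  intro S sets hsets
  have hall : ∀ᵐ ω ∂μ, ∀ i ∈ S, f i ω = f' i ω :=
    (ae_ball_iff S.countable_toSet).2 fun i _ => h i
  have h1 : (⋂ i ∈ S, f' i ⁻¹' sets i : Set Ω) =ᵐ[μ] (⋂ i ∈ S, f i ⁻¹' sets i : Set Ω) := by
    rw [Filter.eventuallyEq_set]
    filter_upwards [hall] with ω hω
    simp only [Set.mem_iInter, Set.mem_preimage]
    exact ⟨fun H i hi => (hω i hi) ▸ H i hi, fun H i hi => (hω i hi).symm ▸ H i hi⟩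
  rw [measure_congr h1, hf S hsets]
  exact Finset.prod_congr rfl fun i hi =>
    (measure_congr (((h i).fun_comp _).symm.mono fun ω hω => hω)).symm

lemma aux_integral_mul_complex {Ω : Type*} {mΩ : MeasurableSpace Ω} {μ : Measure Ω}
    {X Y : Ω → ℂ} (h : IndepFun X Y μ) (hX : Integrable X μ) (hY : Integrable Y μ) :
    ∫ ω, X ω * Y ω ∂μ = (∫ ω, X ω ∂μ) * ∫ ω, Y ω ∂μ := by
  have hXY : Integrable (fun ω => X ω * Y ω) μ := h.integrable_mul hX hY
  have hrr : IndepFun (fun ω => (X ω).re) (fun ω => (Y ω).re) μ :=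
    h.comp Complex.measurable_re Complex.measurable_re
  have hri : IndepFun (fun ω => (X ω).re) (fun ω => (Y ω).im) μ :=
    h.comp Complex.measurable_re Complex.measurable_im
  have hir : IndepFun (fun ω => (X ω).im) (fun ω => (Y ω).re) μ :=
    h.comp Complex.measurable_im Complex.measurable_re
  have hii : IndepFun (fun ω => (X ω).im) (fun ω => (Y ω).im) μ :=
    h.comp Complex.measurable_im Complex.measurable_im
  have hXr : Integrable (fun ω => (X ω).re) μ := hX.re
  have hXi : Integrable (fun ω => (X ω).im) μ := hX.im
  have hYr : Integrable (fun ω => (Y ω).re) μ := hY.re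
  have hYi : Integrable (fun ω => (Y ω).im) μ := hY.im
  have irr : Integrable (fun ω => (X ω).re * (Y ω).re) μ := hrr.integrable_mul hXr hYr
  have iri : Integrable (fun ω => (X ω).re * (Y ω).im) μ := hri.integrable_mul hXr hYi
  have iir : Integrable (fun ω => (X ω).im * (Y ω).re) μ := hir.integrable_mul hXi hYr
  have iii : Integrable (fun ω => (X ω).im * (Y ω).im) μ := hii.integrable_mul hXi hYi
  have err : ∫ ω, (X ω).re * (Y ω).re ∂μ = (∫ ω, (X ω).re ∂μ) * ∫ ω, (Y ω).re ∂μ :=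
    hrr.integral_mul_eq_mul_integral hXr.1 hYr.1
  have eri : ∫ ω, (X ω).re * (Y ω).im ∂μ = (∫ ω, (X ω).re ∂μ) * ∫ ω, (Y ω).im ∂μ :=
    hri.integral_mul_eq_mul_integral hXr.1 hYi.1
  have eir : ∫ ω, (X ω).im * (Y ω).re ∂μ = (∫ ω, (X ω).im ∂μ) * ∫ ω, (Y ω).re ∂μ :=
    hir.integral_mul_eq_mul_integral hXi.1 hYr.1
  have eii : ∫ ω, (X ω).im * (Y ω).im ∂μ = (∫ ω, (X ω).im ∂μ) * ∫ ω, (Y ω).im ∂μ :=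
    hii.integral_mul_eq_mul_integral hXi.1 hYi.1
  have hXre : (∫ ω, X ω ∂μ).re = ∫ ω, (X ω).re ∂μ := by
    rw [← RCLike.re_to_complex, ← integral_re hX]; simp
  have hXim : (∫ ω, X ω ∂μ).im = ∫ ω, (X ω).im ∂μ := by
    rw [← RCLike.im_to_complex, ← integral_im hX]; simp
  have hYre : (∫ ω, Y ω ∂μ).re = ∫ ω, (Y ω).re ∂μ := by
    rw [← RCLike.re_to_complex, ← integral_re hY]; simp
  have hYim : (∫ ω, Y ω ∂μ).im = ∫ ω, (Y ω).im ∂μ := by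
    rw [← RCLike.im_to_complex, ← integral_im hY]; simp
  apply Complex.ext
  · rw [← RCLike.re_to_complex, ← integral_re hXY]
    simp only [RCLike.re_to_complex, Complex.mul_re]
    rw [integral_sub irr iii, err, eii, hXre, hXim, hYre, hYim]
  · rw [← RCLike.im_to_complex, ← integral_im hXY]
    simp only [RCLike.im_to_complex, Complex.mul_im]
    rw [integral_add iri iir, eri, eir, hXre, hXim, hYre, hYim]


lemma aux_memLp_conj {Ω : Type*} {mΩ : MeasurableSpace Ω} {μ : Measure Ω}
    {f : Ω → ℂ} {p : ENNReal} (hf : MemLp f p μ) :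
    MemLp (fun ω => (starRingEnd ℂ) (f ω)) p μ :=
  MemLp.of_le hf (Continuous.comp_aestronglyMeasurable continuous_star hf.1)
    (Filter.Eventually.of_forall fun ω => by simp)

lemma aux_integrable_mul {Ω : Type*} {mΩ : MeasurableSpace Ω} {μ : Measure Ω}
    {f g : Ω → ℂ} (hf : MemLp f 2 μ) (hg : MemLp g 2 μ) :
    Integrable (fun ω => f ω * g ω) μ := by
  have hf2 : Integrable (fun ω => ‖f ω‖ ^ 2) μ := (memLp_two_iff_integrable_sq_norm hf.1).1 hf
  have hg2 : Integrable (fun ω => ‖g ω‖ ^ 2) μ := (memLp_two_iff_integrable_sq_norm hg.1).1 hg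
  refine Integrable.mono' ((hf2.add hg2).div_const 2) (hf.1.mul hg.1)
    (Filter.Eventually.of_forall fun ω => ?_)
  simp only [norm_mul, Pi.add_apply]
  nlinarith [sq_nonneg (‖f ω‖ - ‖g ω‖), norm_nonneg (f ω), norm_nonneg (g ω)]

lemma aux_geom (N : ℕ) (hN : 0 < N) (d : ℤ) (hd : ¬ ((N : ℤ) ∣ d)) :
    ∑ k ∈ Finset.range N,
      Complex.exp (2 * (Real.pi : ℂ) * Complex.I * (d : ℂ) / (N : ℂ)) ^ k = 0 := by
  have hNC : (N : ℂ) ≠ 0 := Nat.cast_ne_zero.2 hN.ne'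
  set z := Complex.exp (2 * (Real.pi : ℂ) * Complex.I * (d : ℂ) / (N : ℂ)) with hz
  have hz1 : z ≠ 1 := by
    rw [hz, Ne, Complex.exp_eq_one_iff]
    rintro ⟨n, hn⟩
    apply hd ⟨n, ?_⟩
    have h2 : (2 * (Real.pi : ℂ) * Complex.I) * (d : ℂ) =
        (2 * (Real.pi : ℂ) * Complex.I) * ((n : ℂ) * (N : ℂ)) := by
      field_simp at hn
      rw [hn]; ring
    have h3 : (d : ℂ) = ((n * N : ℤ) : ℂ) := by
      push_cast
      exact mul_left_cancel₀ (by simp [Real.pi_ne_zero, Complex.I_ne_zero]) h2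
    have h4 : d = n * N := by exact_mod_cast h3
    rw [h4]; ring
  have hzN : z ^ N = 1 := by
    rw [hz, ← Complex.exp_nat_mul]
    rw [show (N : ℂ) * (2 * (Real.pi : ℂ) * Complex.I * (d : ℂ) / (N : ℂ))
        = (d : ℂ) * (2 * (Real.pi : ℂ) * Complex.I) by field_simp]
    exact Complex.exp_int_mul_two_pi_mul_I d
  rw [geom_sum_eq hz1, hzN]
  simp


lemma aux_phi_frobenius (N L : ℕ) (hN : 0 < N) (hL0 : 0 < L) (hL : L ≤ N)
    (Φ : Matrix (Fin N) (Fin N) ℂ)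
    (hΦ : ∀ n n' : Fin N, Φ n n' = (1 / (N : ℂ)) * ∑ i ∈ Finset.range L,
      Complex.exp (2 * (Real.pi : ℂ) * Complex.I *
        (((n' : ℕ) : ℂ) - ((n : ℕ) : ℂ)) * (i : ℂ) / (N : ℂ))) :
    ∑ n : Fin N, ∑ n' : Fin N, ‖Φ n n'‖ ^ 2 = L := by
  have hNC : (N : ℂ) ≠ 0 := Nat.cast_ne_zero.2 hN.ne'
  set e : ℤ → ℂ := fun d => Complex.exp (2 * (Real.pi : ℂ) * Complex.I * (d : ℂ) / (N : ℂ))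
    with he
  have hconj2 : (starRingEnd ℂ) (2 : ℂ) = 2 := map_ofNat _ 2
  have expand : ∀ n n' : Fin N, Φ n n' * (starRingEnd ℂ) (Φ n n') =
      (1 / (N : ℂ)) * (1 / (N : ℂ)) * ∑ i ∈ Finset.range L, ∑ i' ∈ Finset.range L,
        e ((i : ℤ) - (i' : ℤ)) ^ ((n' : ℕ)) * e ((i' : ℤ) - (i : ℤ)) ^ ((n : ℕ)) := by
    intro n n'
    rw [hΦ n n', _root_.map_mul, map_sum, show (starRingEnd ℂ) (1 / (N : ℂ)) = 1 / (N : ℂ) by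
      simp, mul_mul_mul_comm, Finset.sum_mul_sum]
    congr 1
    refine Finset.sum_congr rfl fun i _ => Finset.sum_congr rfl fun i' _ => ?_
    rw [← Complex.exp_conj, he]
    simp only
    rw [← Complex.exp_nat_mul, ← Complex.exp_nat_mul, ← Complex.exp_add, ← Complex.exp_add]
    congr 1
    simp only [map_div₀, _root_.map_mul, map_sub, Complex.conj_I, Complex.conj_ofReal,
      Complex.conj_natCast, hconj2]
    push_cast
    field_simp
    ring
  have main : ∑ n : Fin N, ∑ n' : Fin N, Φ n n' * (starRingEnd ℂ) (Φ n n') = (L : ℂ) := by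
    simp_rw [expand, ← Finset.mul_sum]
    have swap : (∑ n : Fin N, ∑ n' : Fin N, ∑ i ∈ Finset.range L, ∑ i' ∈ Finset.range L,
        e ((i : ℤ) - (i' : ℤ)) ^ ((n' : ℕ)) * e ((i' : ℤ) - (i : ℤ)) ^ ((n : ℕ))) =
        ∑ i ∈ Finset.range L, ∑ i' ∈ Finset.range L,
          (∑ n' : Fin N, e ((i : ℤ) - (i' : ℤ)) ^ ((n' : ℕ))) *
          (∑ n : Fin N, e ((i' : ℤ) - (i : ℤ)) ^ ((n : ℕ))) := by
      simp_rw [Finset.sum_mul_sum]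
      calc (∑ n : Fin N, ∑ n' : Fin N, ∑ i ∈ Finset.range L, ∑ i' ∈ Finset.range L,
            e ((i : ℤ) - (i' : ℤ)) ^ ((n' : ℕ)) * e ((i' : ℤ) - (i : ℤ)) ^ ((n : ℕ)))
          = ∑ n' : Fin N, ∑ n : Fin N, ∑ i ∈ Finset.range L, ∑ i' ∈ Finset.range L,
            e ((i : ℤ) - (i' : ℤ)) ^ ((n' : ℕ)) * e ((i' : ℤ) - (i : ℤ)) ^ ((n : ℕ)) :=
            Finset.sum_comm
        _ = ∑ n' : Fin N, ∑ i ∈ Finset.range L, ∑ n : Fin N, ∑ i' ∈ Finset.range L,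
            e ((i : ℤ) - (i' : ℤ)) ^ ((n' : ℕ)) * e ((i' : ℤ) - (i : ℤ)) ^ ((n : ℕ)) :=
            Finset.sum_congr rfl fun n' _ => Finset.sum_comm
        _ = ∑ n' : Fin N, ∑ i ∈ Finset.range L, ∑ i' ∈ Finset.range L, ∑ n : Fin N,
            e ((i : ℤ) - (i' : ℤ)) ^ ((n' : ℕ)) * e ((i' : ℤ) - (i : ℤ)) ^ ((n : ℕ)) :=
            Finset.sum_congr rfl fun n' _ => Finset.sum_congr rfl fun i _ => Finset.sum_comm
        _ = ∑ i ∈ Finset.range L, ∑ n' : Fin N, ∑ i' ∈ Finset.range L, ∑ n : Fin N,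
            e ((i : ℤ) - (i' : ℤ)) ^ ((n' : ℕ)) * e ((i' : ℤ) - (i : ℤ)) ^ ((n : ℕ)) :=
            Finset.sum_comm
        _ = ∑ i ∈ Finset.range L, ∑ i' ∈ Finset.range L, ∑ n' : Fin N, ∑ n : Fin N,
            e ((i : ℤ) - (i' : ℤ)) ^ ((n' : ℕ)) * e ((i' : ℤ) - (i : ℤ)) ^ ((n : ℕ)) :=
            Finset.sum_congr rfl fun i _ => Finset.sum_comm
    rw [swap]
    have inner : ∀ i ∈ Finset.range L, (∑ i' ∈ Finset.range L,
          (∑ n' : Fin N, e ((i : ℤ) - (i' : ℤ)) ^ ((n' : ℕ))) *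
          (∑ n : Fin N, e ((i' : ℤ) - (i : ℤ)) ^ ((n : ℕ)))) = (N : ℂ) * (N : ℂ) := by
      intro i hi
      have hoff : ∀ i' ∈ Finset.range L, i' ≠ i → (∑ n' : Fin N, e ((i : ℤ) - (i' : ℤ)) ^ ((n' : ℕ))) *
          (∑ n : Fin N, e ((i' : ℤ) - (i : ℤ)) ^ ((n : ℕ))) = 0 := by
        intro i' hi' hne
        have hdvd : ¬ ((N : ℤ) ∣ ((i : ℤ) - (i' : ℤ))) := by
          intro hdvd
          have h0 : ((i : ℤ) - (i' : ℤ)) = 0 := by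
            refine Int.eq_zero_of_abs_lt_dvd hdvd ?_
            have h1 : (i : ℤ) < L := by exact_mod_cast Finset.mem_range.1 hi
            have h2 : (i' : ℤ) < L := by exact_mod_cast Finset.mem_range.1 hi'
            have h3 : (L : ℤ) ≤ N := by exact_mod_cast hL
            rw [abs_sub_lt_iff]
            constructor <;> omega
          have : (i' : ℕ) = (i : ℕ) := by omega
          exact hne this
        have hz : (∑ n' : Fin N, e ((i : ℤ) - (i' : ℤ)) ^ ((n' : ℕ))) = 0 := by
          rw [Fin.sum_univ_eq_sum_range (fun k => e ((i : ℤ) - (i' : ℤ)) ^ k) N]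
          exact aux_geom N hN _ hdvd
        rw [hz, zero_mul]
      rw [Finset.sum_eq_single_of_mem i hi hoff]
      simp [he]
    rw [Finset.sum_congr rfl inner, Finset.sum_const, Finset.card_range]
    field_simp
    rw [nsmul_eq_mul]; ring
  have cast : ((∑ n : Fin N, ∑ n' : Fin N, ‖Φ n n'‖ ^ 2 : ℝ) : ℂ) =
      ∑ n : Fin N, ∑ n' : Fin N, Φ n n' * (starRingEnd ℂ) (Φ n n') := by
    push_cast
    refine Finset.sum_congr rfl fun n _ => Finset.sum_congr rfl fun n' _ => ?_
    rw [Complex.mul_conj]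
    norm_cast
    rw [Complex.normSq_eq_norm_sq]
  have : ((∑ n : Fin N, ∑ n' : Fin N, ‖Φ n n'‖ ^ 2 : ℝ) : ℂ) = ((L : ℝ) : ℂ) := by
    rw [cast, main]; norm_cast
  exact_mod_cast this


lemma aux_sum4 {A B C D : Type*} [Fintype A] [Fintype B] [Fintype C] [Fintype D]
    (f : A → B → ℝ) (g : C → D → ℝ) :
    ∑ k : B, ∑ m' : D, ∑ n : A, ∑ m : C, f n k * g m m'
      = (∑ n : A, ∑ k : B, f n k) * (∑ m : C, ∑ m' : D, g m m') := by
  calc ∑ k : B, ∑ m' : D, ∑ n : A, ∑ m : C, f n k * g m m'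
      = ∑ k : B, ∑ m' : D, (∑ n : A, f n k) * (∑ m : C, g m m') := by
        refine Finset.sum_congr rfl fun k _ => Finset.sum_congr rfl fun m' _ => ?_
        rw [Finset.sum_mul_sum]
    _ = ∑ k : B, (∑ n : A, f n k) * (∑ m' : D, ∑ m : C, g m m') := by
        refine Finset.sum_congr rfl fun k _ => ?_
        rw [Finset.mul_sum]
    _ = (∑ k : B, ∑ n : A, f n k) * (∑ m' : D, ∑ m : C, g m m') := by rw [Finset.sum_mul]
    _ = (∑ n : A, ∑ k : B, f n k) * (∑ m : C, ∑ m' : D, g m m') := by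
        congr 1
        exacts [Finset.sum_comm, Finset.sum_comm]

lemma aux_count (Mn : ℕ) (hM : 0 < Mn) :
    ∑ m : Fin Mn, ∑ m' : Fin Mn,
      (if (m : ℕ) = (m' : ℕ) + 1 then (1 : ℝ) else 0) = (Mn : ℝ) - 1 := by
  have hinner : ∀ m : Fin Mn, (∑ m' : Fin Mn,
      if (m : ℕ) = (m' : ℕ) + 1 then (1 : ℝ) else 0) =
      if 1 ≤ (m : ℕ) then (1 : ℝ) else 0 := by
    intro m
    rw [Fin.sum_univ_eq_sum_range (fun j => if (m : ℕ) = j + 1 then (1 : ℝ) else 0) Mn]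
    rcases Nat.eq_zero_or_pos (m : ℕ) with hm | hm
    · rw [if_neg (by omega), Finset.sum_eq_zero]
      intro j hj
      rw [if_neg (by omega)]
    · rw [if_pos (show 1 ≤ (m : ℕ) by omega), Finset.sum_eq_single ((m : ℕ) - 1)]
      · rw [if_pos (by omega)]
      · intro j hj hne
        rw [if_neg (by omega)]
      · intro hni
        exact absurd (Finset.mem_range.2 (by have := m.isLt; omega)) hni
  rw [Finset.sum_congr rfl fun m _ => hinner m]
  rw [Fin.sum_univ_eq_sum_range (fun j => if 1 ≤ j then (1 : ℝ) else 0) Mn]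
  rw [Finset.sum_boole]
  have : (Finset.range Mn).filter (fun j => 1 ≤ j) = Finset.Ico 1 Mn := by
    ext j
    simp only [Finset.mem_filter, Finset.mem_range, Finset.mem_Ico]
    omega
  rw [this, Nat.card_Ico]
  push_cast [Nat.cast_sub hM]
  ring

lemma aux_mul_conj_self (z : ℂ) : z * (starRingEnd ℂ) z = ((‖z‖ ^ 2 : ℝ) : ℂ) := by
  rw [Complex.mul_conj]; norm_cast; rw [Complex.normSq_eq_norm_sq]

set_option maxHeartbeats 2000000 in
/-- `E[‖Y_ISI‖_F²] = (M−1)·∑_{q=Q̃+1}^{Q} (l_q − N_cp)·P_q`. -/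
theorem stmt5 {Ω : Type*} [MeasureSpace Ω] [IsProbabilityMeasure (volume : Measure Ω)]
    (N M : ℕ) (hN : 0 < N) (hM : 0 < M)
    (Δf Ts Tcp : ℝ) (hΔf : 0 < Δf) (hTs : 0 < Ts) (hTcp : 0 < Tcp) (Ncp : ℕ)
    (Q : ℕ) (hQ : 1 ≤ Q)
    (τ fd : Fin Q → ℝ) (P : Fin Q → ℝ) (l : Fin Q → ℤ)
    (Qt : ℕ) (hQt : Qt ≤ Q)
    (hl : ∀ q : Fin Q, Qt ≤ (q : ℕ) → (Ncp : ℤ) < l q ∧ l q ≤ (N : ℤ) + (Ncp : ℤ))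
    (Φ : Fin Q → Matrix (Fin N) (Fin N) ℂ)
    (hΦ : ∀ q : Fin Q, Qt ≤ (q : ℕ) → ∀ n n' : Fin N,
      Φ q n n' = (1 / (N : ℂ)) * ∑ i ∈ Finset.range (l q - (Ncp : ℤ)).toNat,
        Complex.exp (2 * (Real.pi : ℂ) * Complex.I *
          (((n' : ℕ) : ℂ) - ((n : ℕ) : ℂ)) * (i : ℂ) / (N : ℂ)))
    (b : ℝ → Fin N → ℂ)
    (hb : ∀ (t : ℝ) (n : Fin N),
      b t n = Complex.exp (-(2 * (Real.pi : ℂ) * Complex.I * ((n : ℕ) : ℂ) * (Δf : ℂ) * (t : ℂ))))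
    (c : ℝ → Fin M → ℂ)
    (hc : ∀ (g : ℝ) (m : Fin M),
      c g m = Complex.exp (-(2 * (Real.pi : ℂ) * Complex.I * ((m : ℕ) : ℂ) * (g : ℂ) * (Ts : ℂ))))
    (J₁ : Matrix (Fin M) (Fin M) ℂ)
    (hJ : ∀ m m' : Fin M, J₁ m m' = if (m' : ℕ) = (m : ℕ) + 1 then 1 else 0)
    (s : Fin N × Fin M → Ω → ℂ) (α : Fin Q → Ω → ℂ)
    (hindep : iIndepFun (Sum.elim α s) volume)
    (hident : ∀ A B : Fin N × Fin M, IdentDistrib (s A) (s B) volume volume)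
    (hsL4 : ∀ A : Fin N × Fin M, MemLp (s A) 4 volume)
    (hsmean : ∀ A : Fin N × Fin M, ∫ ω, s A ω = 0)
    (hssq : ∀ A : Fin N × Fin M, ∫ ω, (s A ω) ^ 2 = 0)
    (hsabs2 : ∀ A : Fin N × Fin M, ∫ ω, ‖s A ω‖ ^ 2 = 1)
    (hαL2 : ∀ q : Fin Q, MemLp (α q) 2 volume)
    (hαmean : ∀ q : Fin Q, ∫ ω, α q ω = 0)
    (hαabs2 : ∀ q : Fin Q, ∫ ω, ‖α q ω‖ ^ 2 = P q)
    (YISI : Ω → Matrix (Fin N) (Fin M) ℂ)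
    (hY : ∀ ω, YISI ω = ∑ q ∈ Finset.univ.filter (fun q : Fin Q => Qt ≤ (q : ℕ)),
      α q ω • (Φ q *
        ((Matrix.of fun n m => b (τ q - Tcp) n * (starRingEnd ℂ) (c (fd q) m)) ⊙
          (Matrix.of fun n m => s (n, m) ω)) * J₁)) :
    ∫ ω, ∑ n : Fin N, ∑ m : Fin M, ‖YISI ω n m‖ ^ 2 =
      ((M : ℝ) - 1) * ∑ q ∈ Finset.univ.filter (fun q : Fin Q => Qt ≤ (q : ℕ)),
        ((l q : ℝ) - (Ncp : ℝ)) * P q := by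
  classical
  -- measurable modifications
  set α' : Fin Q → Ω → ℂ := fun q => ((hαL2 q).1).mk (α q) with hα'def
  set s' : Fin N × Fin M → Ω → ℂ := fun A => ((hsL4 A).1).mk (s A) with hs'def
  have hαe : ∀ q, α q =ᵐ[volume] α' q := fun q => ((hαL2 q).1).ae_eq_mk
  have hse : ∀ A, s A =ᵐ[volume] s' A := fun A => ((hsL4 A).1).ae_eq_mk
  have hindep' : iIndepFun (Sum.elim α' s') volume :=
    aux_iIndepFun_ae_eq hindep (by rintro (q | A); exacts [hαe q, hse A])
  have hmeas : ∀ i, Measurable (Sum.elim α' s' i) := by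
    rintro (q | A)
    · exact ((hαL2 q).1).stronglyMeasurable_mk.measurable
    · exact ((hsL4 A).1).stronglyMeasurable_mk.measurable
  have hα2' : ∀ q, MemLp (α' q) 2 volume := fun q => (hαL2 q).ae_eq (hαe q)
  have hs2' : ∀ A, MemLp (s' A) 2 volume := fun A =>
    ((hsL4 A).ae_eq (hse A)).mono_exponent (by norm_num)
  have hα'mean : ∀ q, ∫ ω, α' q ω = 0 := fun q => by
    rw [← integral_congr_ae (hαe q)]; exact hαmean q
  have hs'mean : ∀ A, ∫ ω, s' A ω = 0 := fun A => by
    rw [← integral_congr_ae (hse A)]; exact hsmean A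
  have hα'abs2 : ∀ q, ∫ ω, ‖α' q ω‖ ^ 2 = P q := fun q => by
    have h2 := integral_congr_ae (((hαe q).fun_comp fun z : ℂ => ‖z‖ ^ 2).symm)
    simp only [Function.comp] at h2
    rw [h2]; exact hαabs2 q
  have hs'abs2 : ∀ A, ∫ ω, ‖s' A ω‖ ^ 2 = 1 := fun A => by
    have h2 := integral_congr_ae (((hse A).fun_comp fun z : ℂ => ‖z‖ ^ 2).symm)
    simp only [Function.comp] at h2
    rw [h2]; exact hsabs2 A
  -- independence of the two product blocks
  have hconjm : Measurable fun z : ℂ => (starRingEnd ℂ) z := Complex.continuous_conj.measurable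
  have hpair : ∀ (q q' : Fin Q) (A A' : Fin N × Fin M),
      IndepFun (fun ω => α' q ω * (starRingEnd ℂ) (α' q' ω))
        (fun ω => s' A ω * (starRingEnd ℂ) (s' A' ω)) volume := by
    intro q q' A A'
    have h := hindep'.indepFun_prodMk_prodMk hmeas (.inl q) (.inl q') (.inr A) (.inr A')
      (by simp) (by simp) (by simp) (by simp)
    exact h.comp (φ := fun p : ℂ × ℂ => p.1 * (starRingEnd ℂ) p.2)
      (ψ := fun p : ℂ × ℂ => p.1 * (starRingEnd ℂ) p.2)
      (measurable_fst.mul (hconjm.comp measurable_snd))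
      (measurable_fst.mul (hconjm.comp measurable_snd))
  -- component expectations
  have hEF1 : ∀ q q' : Fin Q, ∫ ω, α' q ω * (starRingEnd ℂ) (α' q' ω) =
      if q = q' then (P q : ℂ) else 0 := by
    intro q q'
    by_cases h : q = q'
    · subst h
      rw [if_pos rfl]
      calc ∫ ω, α' q ω * (starRingEnd ℂ) (α' q ω)
          = ∫ ω, ((‖α' q ω‖ ^ 2 : ℝ) : ℂ) := by
            refine integral_congr_ae (Filter.Eventually.of_forall fun ω => ?_)
            exact aux_mul_conj_self _
        _ = ((∫ ω, ‖α' q ω‖ ^ 2 : ℝ) : ℂ) := integral_ofReal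
        _ = (P q : ℂ) := by rw [hα'abs2 q]
    · rw [if_neg h]
      have hind : IndepFun (α' q) (fun ω => (starRingEnd ℂ) (α' q' ω)) volume := by
        have h0 : IndepFun (α' q) (α' q') volume :=
          hindep'.indepFun (show (Sum.inl q : Fin Q ⊕ (Fin N × Fin M)) ≠ Sum.inl q' by
            simp [h])
        exact h0.comp measurable_id hconjm
      rw [aux_integral_mul_complex hind ((hα2' q).integrable (by norm_num))
        ((aux_memLp_conj (hα2' q')).integrable (by norm_num)), hα'mean q, zero_mul]
  have hEF2 : ∀ A A' : Fin N × Fin M, ∫ ω, s' A ω * (starRingEnd ℂ) (s' A' ω) =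
      if A = A' then (1 : ℂ) else 0 := by
    intro A A'
    by_cases h : A = A'
    · subst h
      rw [if_pos rfl]
      calc ∫ ω, s' A ω * (starRingEnd ℂ) (s' A ω)
          = ∫ ω, ((‖s' A ω‖ ^ 2 : ℝ) : ℂ) := by
            refine integral_congr_ae (Filter.Eventually.of_forall fun ω => ?_)
            exact aux_mul_conj_self _
        _ = ((∫ ω, ‖s' A ω‖ ^ 2 : ℝ) : ℂ) := integral_ofReal
        _ = (1 : ℂ) := by rw [hs'abs2 A]; norm_num
    · rw [if_neg h]
      have hind : IndepFun (s' A) (fun ω => (starRingEnd ℂ) (s' A' ω)) volume := by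
        have h0 : IndepFun (s' A) (s' A') volume :=
          hindep'.indepFun (show (Sum.inr A : Fin Q ⊕ (Fin N × Fin M)) ≠ Sum.inr A' by
            simp [h])
        exact h0.comp measurable_id hconjm
      rw [aux_integral_mul_complex hind ((hs2' A).integrable (by norm_num))
        ((aux_memLp_conj (hs2' A')).integrable (by norm_num)), hs'mean A, zero_mul]
  have hiF1 : ∀ q q' : Fin Q, Integrable (fun ω => α' q ω * (starRingEnd ℂ) (α' q' ω)) volume :=
    fun q q' => aux_integrable_mul (hα2' q) (aux_memLp_conj (hα2' q'))
  have hiF2 : ∀ A A' : Fin N × Fin M,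
      Integrable (fun ω => s' A ω * (starRingEnd ℂ) (s' A' ω)) volume :=
    fun A A' => aux_integrable_mul (hs2' A) (aux_memLp_conj (hs2' A'))
  have hptw : ∀ (q q' : Fin Q) (A A' : Fin N × Fin M) (ω : Ω),
      (α' q ω * s' A ω) * (starRingEnd ℂ) (α' q' ω * s' A' ω) =
      (α' q ω * (starRingEnd ℂ) (α' q' ω)) * (s' A ω * (starRingEnd ℂ) (s' A' ω)) := by
    intro q q' A A' ω
    rw [_root_.map_mul]
    ring
  have hE1int : ∀ (q q' : Fin Q) (A A' : Fin N × Fin M),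
      Integrable (fun ω => (α' q ω * s' A ω) * (starRingEnd ℂ) (α' q' ω * s' A' ω)) volume := by
    intro q q' A A'
    have := (hpair q q' A A').integrable_mul (hiF1 q q') (hiF2 A A')
    refine this.congr (Filter.Eventually.of_forall fun ω => ?_)
    exact (hptw q q' A A' ω).symm
  have hE1val : ∀ (q q' : Fin Q) (A A' : Fin N × Fin M),
      ∫ ω, (α' q ω * s' A ω) * (starRingEnd ℂ) (α' q' ω * s' A' ω) =
      if q = q' ∧ A = A' then (P q : ℂ) else 0 := by
    intro q q' A A'
    rw [integral_congr_ae (Filter.Eventually.of_forall (hptw q q' A A')),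
      aux_integral_mul_complex (hpair q q' A A') (hiF1 q q') (hiF2 A A'),
      hEF1 q q', hEF2 A A']
    rcases eq_or_ne q q' with h1 | h1 <;> rcases eq_or_ne A A' with h2 | h2 <;>
      simp [h1, h2]
  -- the coefficient array and the random vector
  set X : Fin Q × Fin N × Fin M → Ω → ℂ := fun t ω => α' t.1 ω * s' t.2 ω with hXdef
  set C : Fin N → Fin M → Fin Q × Fin N × Fin M → ℂ := fun n m t =>
    (if Qt ≤ ((t.1 : Fin Q) : ℕ) then (1 : ℂ) else 0) *
      (Φ t.1 n t.2.1 * (b (τ t.1 - Tcp) t.2.1 * (starRingEnd ℂ) (c (fd t.1) t.2.2)) *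
        J₁ t.2.2 m) with hCdef
  -- a.e. entrywise expansion of Y
  have hYae : ∀ᵐ ω ∂(volume : Measure Ω), ∀ (n : Fin N) (m : Fin M),
      YISI ω n m = ∑ t : Fin Q × Fin N × Fin M, C n m t * X t ω := by
    have h1 : ∀ᵐ ω ∂(volume : Measure Ω), ∀ q, α q ω = α' q ω := ae_all_iff.2 hαe
    have h2 : ∀ᵐ ω ∂(volume : Measure Ω), ∀ A, s A ω = s' A ω := ae_all_iff.2 hse
    filter_upwards [h1, h2] with ω hω1 hω2
    intro n m
    rw [hY ω, Matrix.sum_apply, Finset.sum_filter]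
    simp only [Fintype.sum_prod_type]
    refine Finset.sum_congr rfl fun q _ => ?_
    by_cases hq : Qt ≤ (q : ℕ)
    · rw [if_pos hq]
      simp only [hCdef, hXdef, if_pos hq, one_mul]
      simp only [Matrix.smul_apply, smul_eq_mul, Matrix.mul_apply, Matrix.hadamard_apply,
        Matrix.of_apply]
      rw [hω1 q, Finset.mul_sum]
      simp only [Finset.sum_mul, Finset.mul_sum]
      rw [Finset.sum_comm]
      refine Finset.sum_congr rfl fun k _ => Finset.sum_congr rfl fun j _ => ?_
      rw [hω2 (k, j)]
      ring
    · rw [if_neg hq]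
      simp only [hCdef, if_neg hq, zero_mul]
      simp
  -- integrability ladder
  have hint1 : ∀ t t' : Fin Q × Fin N × Fin M,
      Integrable (fun ω => X t ω * (starRingEnd ℂ) (X t' ω)) volume :=
    fun t t' => hE1int t.1 t'.1 t.2 t'.2
  have hint2 : ∀ (n : Fin N) (m : Fin M) (t : Fin Q × Fin N × Fin M),
      Integrable (fun ω => ∑ t' : Fin Q × Fin N × Fin M,
        (C n m t * (starRingEnd ℂ) (C n m t')) * (X t ω * (starRingEnd ℂ) (X t' ω))) volume :=
    fun n m t => integrable_finset_sum _ fun t' _ => (hint1 t t').const_mul _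
  have hint3 : ∀ (n : Fin N) (m : Fin M),
      Integrable (fun ω => ∑ t : Fin Q × Fin N × Fin M, ∑ t' : Fin Q × Fin N × Fin M,
        (C n m t * (starRingEnd ℂ) (C n m t')) * (X t ω * (starRingEnd ℂ) (X t' ω))) volume :=
    fun n m => integrable_finset_sum _ fun t _ => hint2 n m t
  have hint4 : ∀ n : Fin N,
      Integrable (fun ω => ∑ m : Fin M, ∑ t : Fin Q × Fin N × Fin M,
        ∑ t' : Fin Q × Fin N × Fin M,
        (C n m t * (starRingEnd ℂ) (C n m t')) * (X t ω * (starRingEnd ℂ) (X t' ω))) volume :=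
    fun n => integrable_finset_sum _ fun m _ => hint3 n m
  have hTint : Integrable (fun ω => ∑ n : Fin N, ∑ m : Fin M,
      ∑ t : Fin Q × Fin N × Fin M, ∑ t' : Fin Q × Fin N × Fin M,
      (C n m t * (starRingEnd ℂ) (C n m t')) * (X t ω * (starRingEnd ℂ) (X t' ω))) volume :=
    integrable_finset_sum _ fun n _ => hint4 n
  -- a.e. rewrite of the integrand
  have hg : ∀ᵐ ω ∂(volume : Measure Ω), (∑ n : Fin N, ∑ m : Fin M, ‖YISI ω n m‖ ^ 2) =
      (∑ n : Fin N, ∑ m : Fin M, ∑ t : Fin Q × Fin N × Fin M, ∑ t' : Fin Q × Fin N × Fin M,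
        (C n m t * (starRingEnd ℂ) (C n m t')) * (X t ω * (starRingEnd ℂ) (X t' ω))).re := by
    filter_upwards [hYae] with ω hω
    have hsums : (∑ n : Fin N, ∑ m : Fin M, ∑ t : Fin Q × Fin N × Fin M,
        ∑ t' : Fin Q × Fin N × Fin M,
        (C n m t * (starRingEnd ℂ) (C n m t')) * (X t ω * (starRingEnd ℂ) (X t' ω))) =
        ∑ n : Fin N, ∑ m : Fin M, ((∑ t : Fin Q × Fin N × Fin M, C n m t * X t ω) *
          (starRingEnd ℂ) (∑ t : Fin Q × Fin N × Fin M, C n m t * X t ω)) := by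
      refine Finset.sum_congr rfl fun n _ => Finset.sum_congr rfl fun m _ => ?_
      rw [map_sum, Finset.sum_mul_sum]
      refine Finset.sum_congr rfl fun t _ => Finset.sum_congr rfl fun t' _ => ?_
      simp only [_root_.map_mul]
      ring
    rw [hsums, Complex.re_sum]
    refine Finset.sum_congr rfl fun n _ => ?_
    rw [Complex.re_sum]
    refine Finset.sum_congr rfl fun m _ => ?_
    rw [hω n m, aux_mul_conj_self, Complex.ofReal_re]
  rw [integral_congr_ae hg]
  -- move the integral inside
  have hre : ∫ ω, (∑ n : Fin N, ∑ m : Fin M, ∑ t : Fin Q × Fin N × Fin M,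
      ∑ t' : Fin Q × Fin N × Fin M,
      (C n m t * (starRingEnd ℂ) (C n m t')) * (X t ω * (starRingEnd ℂ) (X t' ω))).re =
      (∫ ω, ∑ n : Fin N, ∑ m : Fin M, ∑ t : Fin Q × Fin N × Fin M,
      ∑ t' : Fin Q × Fin N × Fin M,
      (C n m t * (starRingEnd ℂ) (C n m t')) * (X t ω * (starRingEnd ℂ) (X t' ω))).re := by
    have := integral_re (μ := (volume : Measure Ω)) hTint
    simpa [RCLike.re_to_complex] using this
  rw [hre]
  have hTval : (∫ ω, ∑ n : Fin N, ∑ m : Fin M, ∑ t : Fin Q × Fin N × Fin M,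
      ∑ t' : Fin Q × Fin N × Fin M,
      (C n m t * (starRingEnd ℂ) (C n m t')) * (X t ω * (starRingEnd ℂ) (X t' ω))) =
      ∑ n : Fin N, ∑ m : Fin M, ∑ t : Fin Q × Fin N × Fin M,
        (C n m t * (starRingEnd ℂ) (C n m t)) * ((P t.1 : ℝ) : ℂ) := by
    rw [integral_finset_sum _ fun n _ => hint4 n]
    refine Finset.sum_congr rfl fun n _ => ?_
    rw [integral_finset_sum _ fun m _ => hint3 n m]
    refine Finset.sum_congr rfl fun m _ => ?_
    rw [integral_finset_sum _ fun t _ => hint2 n m t]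
    refine Finset.sum_congr rfl fun t _ => ?_
    rw [integral_finset_sum _ fun t' _ => (hint1 t t').const_mul _]
    calc (∑ t' : Fin Q × Fin N × Fin M, ∫ ω,
          (C n m t * (starRingEnd ℂ) (C n m t')) * (X t ω * (starRingEnd ℂ) (X t' ω))) =
        ∑ t' : Fin Q × Fin N × Fin M, if t = t' then
          (C n m t * (starRingEnd ℂ) (C n m t')) * ((P t.1 : ℝ) : ℂ) else 0 := by
          refine Finset.sum_congr rfl fun t' _ => ?_
          rw [MeasureTheory.integral_const_mul, hE1val t.1 t'.1 t.2 t'.2]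
          rcases eq_or_ne t t' with h | h
          · subst h; simp
          · rw [if_neg h, if_neg (by rwa [← Prod.ext_iff]), mul_zero]
      _ = (C n m t * (starRingEnd ℂ) (C n m t)) * ((P t.1 : ℝ) : ℂ) := by
          rw [Finset.sum_ite_eq]
          simp
  rw [hTval]
  -- take real parts
  have hrealize : (∑ n : Fin N, ∑ m : Fin M, ∑ t : Fin Q × Fin N × Fin M,
      (C n m t * (starRingEnd ℂ) (C n m t)) * ((P t.1 : ℝ) : ℂ)).re =
      ∑ n : Fin N, ∑ m : Fin M, ∑ t : Fin Q × Fin N × Fin M, ‖C n m t‖ ^ 2 * P t.1 := by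
    rw [show (∑ n : Fin N, ∑ m : Fin M, ∑ t : Fin Q × Fin N × Fin M,
        (C n m t * (starRingEnd ℂ) (C n m t)) * ((P t.1 : ℝ) : ℂ)) =
        (((∑ n : Fin N, ∑ m : Fin M, ∑ t : Fin Q × Fin N × Fin M,
          ‖C n m t‖ ^ 2 * P t.1 : ℝ)) : ℂ) from ?_, Complex.ofReal_re]
    push_cast
    refine Finset.sum_congr rfl fun n _ => Finset.sum_congr rfl fun m _ =>
      Finset.sum_congr rfl fun t _ => ?_
    rw [aux_mul_conj_self]
    norm_cast
  rw [hrealize]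
  -- the purely combinatorial evaluation
  have hC2 : ∀ (n : Fin N) (m : Fin M) (q : Fin Q) (k : Fin N) (j : Fin M),
      ‖C n m (q, k, j)‖ ^ 2 = (if Qt ≤ (q : ℕ) then (1 : ℝ) else 0) *
        (‖Φ q n k‖ ^ 2 * (if (m : ℕ) = (j : ℕ) + 1 then (1 : ℝ) else 0)) := by
    intro n m q k j
    have hbn : ‖b (τ q - Tcp) k‖ = 1 := by
      rw [hb]
      rw [show -(2 * (Real.pi : ℂ) * Complex.I * ((k : ℕ) : ℂ) * (Δf : ℂ) * ((τ q - Tcp : ℝ) : ℂ))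
        = ((-(2 * Real.pi * (k : ℕ) * Δf * (τ q - Tcp)) : ℝ) : ℂ) * Complex.I by
          push_cast; ring]
      rw [Complex.norm_exp_ofReal_mul_I]
    have hcn : ‖(starRingEnd ℂ) (c (fd q) j)‖ = 1 := by
      rw [RCLike.norm_conj, hc]
      rw [show -(2 * (Real.pi : ℂ) * Complex.I * ((j : ℕ) : ℂ) * ((fd q : ℝ) : ℂ) * (Ts : ℂ))
        = ((-(2 * Real.pi * (j : ℕ) * fd q * Ts) : ℝ) : ℂ) * Complex.I by
          push_cast; ring]
      rw [Complex.norm_exp_ofReal_mul_I]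
    have hJn : ‖J₁ j m‖ ^ 2 = (if (m : ℕ) = (j : ℕ) + 1 then (1 : ℝ) else 0) := by
      rw [hJ]
      split_ifs <;> simp
    have hin : ‖(if Qt ≤ (q : ℕ) then (1 : ℂ) else 0)‖ ^ 2 =
        (if Qt ≤ (q : ℕ) then (1 : ℝ) else 0) := by
      split_ifs <;> simp
    simp only [hCdef]
    rw [norm_mul, norm_mul, norm_mul, norm_mul, mul_pow, mul_pow, mul_pow, mul_pow,
      hbn, hcn, hJn, hin]
    ring_nf
  -- reorganize the sums
  have hswap : (∑ n : Fin N, ∑ m : Fin M, ∑ t : Fin Q × Fin N × Fin M,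
      ‖C n m t‖ ^ 2 * P t.1) = ∑ t : Fin Q × Fin N × Fin M, ∑ n : Fin N, ∑ m : Fin M,
      ‖C n m t‖ ^ 2 * P t.1 := by
    calc (∑ n : Fin N, ∑ m : Fin M, ∑ t : Fin Q × Fin N × Fin M, ‖C n m t‖ ^ 2 * P t.1)
        = ∑ n : Fin N, ∑ t : Fin Q × Fin N × Fin M, ∑ m : Fin M, ‖C n m t‖ ^ 2 * P t.1 :=
          Finset.sum_congr rfl fun n _ => Finset.sum_comm
      _ = ∑ t : Fin Q × Fin N × Fin M, ∑ n : Fin N, ∑ m : Fin M, ‖C n m t‖ ^ 2 * P t.1 :=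
          Finset.sum_comm
  rw [hswap]
  simp only [Fintype.sum_prod_type]
  have hqval : ∀ q : Fin Q, (∑ k : Fin N, ∑ j : Fin M, ∑ n : Fin N, ∑ m : Fin M,
      ‖C n m (q, k, j)‖ ^ 2 * P q) =
      (if Qt ≤ (q : ℕ) then (1 : ℝ) else 0) * (((l q : ℝ) - (Ncp : ℝ)) * ((M : ℝ) - 1) * P q) := by
    intro q
    by_cases hq : Qt ≤ (q : ℕ)
    · rw [if_pos hq, one_mul]
      have hlq := hl q hq
      have hL0 : 0 < (l q - (Ncp : ℤ)).toNat := by omega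
      have hLN : (l q - (Ncp : ℤ)).toNat ≤ N := by omega
      have hphi := aux_phi_frobenius N ((l q - (Ncp : ℤ)).toNat) hN hL0 hLN (Φ q) (hΦ q hq)
      have hphi' : (∑ n : Fin N, ∑ k : Fin N, ‖Φ q n k‖ ^ 2) = (l q : ℝ) - (Ncp : ℝ) := by
        rw [hphi]
        have h8 : ((l q - (Ncp : ℤ)).toNat : ℤ) = l q - (Ncp : ℤ) := Int.toNat_of_nonneg (by omega)
        rw [← Int.cast_natCast (R := ℝ), h8]
        push_cast
        ring
      calc (∑ k : Fin N, ∑ j : Fin M, ∑ n : Fin N, ∑ m : Fin M, ‖C n m (q, k, j)‖ ^ 2 * P q)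
          = (∑ k : Fin N, ∑ j : Fin M, ∑ n : Fin N, ∑ m : Fin M,
              ‖Φ q n k‖ ^ 2 * (if (m : ℕ) = (j : ℕ) + 1 then (1 : ℝ) else 0)) * P q := by
            simp only [← Finset.sum_mul]
            congr 1
            refine Finset.sum_congr rfl fun k _ => Finset.sum_congr rfl fun j _ =>
              Finset.sum_congr rfl fun n _ => Finset.sum_congr rfl fun m _ => ?_
            rw [hC2 n m q k j, if_pos hq, one_mul]
        _ = (((l q : ℝ) - (Ncp : ℝ)) * ((M : ℝ) - 1)) * P q := by
            rw [aux_sum4 (fun (n k : Fin N) => ‖Φ q n k‖ ^ 2)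
              (fun (m j : Fin M) => if (m : ℕ) = (j : ℕ) + 1 then (1 : ℝ) else 0), hphi',
              aux_count M hM]
        _ = ((l q : ℝ) - (Ncp : ℝ)) * ((M : ℝ) - 1) * P q := by ring
    · rw [if_neg hq, zero_mul]
      refine Finset.sum_eq_zero fun k _ => Finset.sum_eq_zero fun j _ =>
        Finset.sum_eq_zero fun n _ => Finset.sum_eq_zero fun m _ => ?_
      rw [hC2 n m q k j, if_neg hq, zero_mul, zero_mul]
  rw [Finset.sum_congr rfl fun q _ => hqval q]
  rw [show (∑ q : Fin Q, (if Qt ≤ (q : ℕ) then (1 : ℝ) else 0) *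
      (((l q : ℝ) - (Ncp : ℝ)) * ((M : ℝ) - 1) * P q)) =
      ∑ q ∈ Finset.univ.filter (fun q : Fin Q => Qt ≤ (q : ℕ)),
        (((l q : ℝ) - (Ncp : ℝ)) * ((M : ℝ) - 1) * P q) from ?_]
  · rw [Finset.mul_sum]
    exact Finset.sum_congr rfl fun q _ => by ring
  · rw [Finset.sum_filter]
    exact Finset.sum_congr rfl fun q _ => by split_ifs <;> simp
end

section
/- The ISI and ICI components are uncorrelated: E[Tr(Y_ISI^H · Y_ICI)] = 0. -/
open MeasureTheory ProbabilityTheory Complex Finset Matrix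

private lemma memLp_star {α : Type*} {mα : MeasurableSpace α} {μ : Measure α} {f : α → ℂ}
    {p : ENNReal} (hf : MemLp f p μ) : MemLp (fun ω => star (f ω)) p μ :=
  hf.of_le (continuous_star.comp_aestronglyMeasurable hf.1)
    (Filter.Eventually.of_forall fun ω => by simp)

private lemma integrable_mul_L2 {α : Type*} {mα : MeasurableSpace α} {μ : Measure α}
    {f g : α → ℂ} (hf : MemLp f 2 μ) (hg : MemLp g 2 μ) :
    Integrable (fun ω => f ω * g ω) μ := by
  have h : MemLp (f • g) 1 μ := hg.smul hf (hpqr := ⟨by simp [one_div, ENNReal.inv_two_add_inv_two]⟩)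
  exact (memLp_one_iff_integrable.mp h).congr
    (Filter.Eventually.of_forall fun ω => by simp [Pi.smul_apply, smul_eq_mul])

private lemma indep_integral_cmul {Ωt : Type*} {mΩ : MeasurableSpace Ωt} {μ : Measure Ωt}
    {X Y : Ωt → ℂ} (h : IndepFun X Y μ) (hX : Integrable X μ) (hY : Integrable Y μ) :
    ∫ ω, X ω * Y ω ∂μ = (∫ ω, X ω ∂μ) * ∫ ω, Y ω ∂μ := by
  have hXY : Integrable (fun ω => X ω * Y ω) μ := h.integrable_mul hX hY
  have mre : Measurable (RCLike.re : ℂ → ℝ) := RCLike.measurable_re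
  have mim : Measurable (RCLike.im : ℂ → ℝ) := RCLike.measurable_im
  have hrr : IndepFun (fun ω => RCLike.re (X ω)) (fun ω => RCLike.re (Y ω)) μ := h.comp mre mre
  have hri : IndepFun (fun ω => RCLike.re (X ω)) (fun ω => RCLike.im (Y ω)) μ := h.comp mre mim
  have hir : IndepFun (fun ω => RCLike.im (X ω)) (fun ω => RCLike.re (Y ω)) μ := h.comp mim mre
  have hii : IndepFun (fun ω => RCLike.im (X ω)) (fun ω => RCLike.im (Y ω)) μ := h.comp mim mim
  have i1 : Integrable (fun ω => RCLike.re (X ω) * RCLike.re (Y ω)) μ :=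
    hrr.integrable_mul hX.re hY.re
  have i2 : Integrable (fun ω => RCLike.re (X ω) * RCLike.im (Y ω)) μ :=
    hri.integrable_mul hX.re hY.im
  have i3 : Integrable (fun ω => RCLike.im (X ω) * RCLike.re (Y ω)) μ :=
    hir.integrable_mul hX.im hY.re
  have i4 : Integrable (fun ω => RCLike.im (X ω) * RCLike.im (Y ω)) μ :=
    hii.integrable_mul hX.im hY.im
  have e1 : ∫ ω, RCLike.re (X ω) * RCLike.re (Y ω) ∂μ
      = (∫ ω, RCLike.re (X ω) ∂μ) * ∫ ω, RCLike.re (Y ω) ∂μ :=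
    hrr.integral_fun_mul_eq_mul_integral hX.re.aestronglyMeasurable hY.re.aestronglyMeasurable
  have e2 : ∫ ω, RCLike.re (X ω) * RCLike.im (Y ω) ∂μ
      = (∫ ω, RCLike.re (X ω) ∂μ) * ∫ ω, RCLike.im (Y ω) ∂μ :=
    hri.integral_fun_mul_eq_mul_integral hX.re.aestronglyMeasurable hY.im.aestronglyMeasurable
  have e3 : ∫ ω, RCLike.im (X ω) * RCLike.re (Y ω) ∂μ
      = (∫ ω, RCLike.im (X ω) ∂μ) * ∫ ω, RCLike.re (Y ω) ∂μ :=
    hir.integral_fun_mul_eq_mul_integral hX.im.aestronglyMeasurable hY.re.aestronglyMeasurable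
  have e4 : ∫ ω, RCLike.im (X ω) * RCLike.im (Y ω) ∂μ
      = (∫ ω, RCLike.im (X ω) ∂μ) * ∫ ω, RCLike.im (Y ω) ∂μ :=
    hii.integral_fun_mul_eq_mul_integral hX.im.aestronglyMeasurable hY.im.aestronglyMeasurable
  rw [← integral_re_add_im hXY, ← integral_re_add_im hX, ← integral_re_add_im hY]
  simp only [RCLike.mul_re, RCLike.mul_im]
  rw [integral_sub i1 i4, integral_add i2 i3, e1, e2, e3, e4]
  push_cast
  have hI2 : (RCLike.I : ℂ) = Complex.I := rfl
  rw [hI2]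
  ring_nf
  rw [Complex.I_sq]
  ring

private lemma iIndepFun_ae_congr {ι Ωt : Type*} {mΩ : MeasurableSpace Ωt} {μ : Measure Ωt}
    {f g : ι → Ωt → ℂ} (h : iIndepFun f μ)
    (hfg : ∀ i, f i =ᵐ[μ] g i) : iIndepFun g μ := by
  rw [iIndepFun_iff_measure_inter_preimage_eq_mul] at h ⊢
  intro S sets hsets
  have hae : ∀ i ∈ S, (f i ⁻¹' sets i : Set Ωt) =ᵐ[μ] (g i ⁻¹' sets i) := by
    intro i _
    refine Filter.eventuallyEq_set.mpr ?_
    filter_upwards [hfg i] with ω hω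
    simp [Set.mem_preimage, hω]
  have hH : ∀ᵐ ω ∂μ, ∀ i ∈ S, f i ω = g i ω :=
    (Filter.eventually_all_finset S).mpr fun i _ => hfg i
  have hInter : (⋂ i ∈ S, f i ⁻¹' sets i : Set Ωt) =ᵐ[μ] (⋂ i ∈ S, g i ⁻¹' sets i) := by
    refine Filter.eventuallyEq_set.mpr ?_
    filter_upwards [hH] with ω hω
    simp only [Set.mem_iInter, Set.mem_preimage]
    exact forall₂_congr fun i hi => by rw [hω i hi]
  rw [← measure_congr hInter, h S hsets]
  exact Finset.prod_congr rfl fun i hi => measure_congr (hae i hi)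

/-- the ISI and ICI components are uncorrelated:
`E[Tr(Y_ISIᴴ · Y_ICI)] = 0`. -/
theorem stmt6 {Ω : Type*} [MeasureSpace Ω] [IsProbabilityMeasure (volume : Measure Ω)]
    (N M : ℕ) (hN : 0 < N) (hM : 0 < M)
    (Δf Ts Tcp : ℝ) (hΔf : 0 < Δf) (hTs : 0 < Ts) (hTcp : 0 < Tcp) (Ncp : ℕ)
    (Q : ℕ) (hQ : 1 ≤ Q)
    (τ fd : Fin Q → ℝ) (P : Fin Q → ℝ) (l : Fin Q → ℤ)
    (Qt : ℕ) (hQt : Qt ≤ Q)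
    (hl : ∀ q : Fin Q, Qt ≤ (q : ℕ) → (Ncp : ℤ) < l q ∧ l q ≤ (N : ℤ) + (Ncp : ℤ))
    (Φ : Fin Q → Matrix (Fin N) (Fin N) ℂ)
    (hΦ : ∀ q : Fin Q, Qt ≤ (q : ℕ) → ∀ n n' : Fin N,
      Φ q n n' = (1 / (N : ℂ)) * ∑ i ∈ Finset.range (l q - (Ncp : ℤ)).toNat,
        Complex.exp (2 * (Real.pi : ℂ) * Complex.I *
          (((n' : ℕ) : ℂ) - ((n : ℕ) : ℂ)) * (i : ℂ) / (N : ℂ)))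
    (b : ℝ → Fin N → ℂ)
    (hb : ∀ (t : ℝ) (n : Fin N),
      b t n = Complex.exp (-(2 * (Real.pi : ℂ) * Complex.I * ((n : ℕ) : ℂ) * (Δf : ℂ) * (t : ℂ))))
    (c : ℝ → Fin M → ℂ)
    (hc : ∀ (g : ℝ) (m : Fin M),
      c g m = Complex.exp (-(2 * (Real.pi : ℂ) * Complex.I * ((m : ℕ) : ℂ) * (g : ℂ) * (Ts : ℂ))))
    (J₁ : Matrix (Fin M) (Fin M) ℂ)
    (hJ : ∀ m m' : Fin M, J₁ m m' = if (m' : ℕ) = (m : ℕ) + 1 then 1 else 0)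
    (s : Fin N × Fin M → Ω → ℂ) (α : Fin Q → Ω → ℂ)
    (hindep : iIndepFun (Sum.elim α s) volume)
    (hident : ∀ A B : Fin N × Fin M, IdentDistrib (s A) (s B) volume volume)
    (hsL4 : ∀ A : Fin N × Fin M, MemLp (s A) 4 volume)
    (hsmean : ∀ A : Fin N × Fin M, ∫ ω, s A ω = 0)
    (hssq : ∀ A : Fin N × Fin M, ∫ ω, (s A ω) ^ 2 = 0)
    (hsabs2 : ∀ A : Fin N × Fin M, ∫ ω, ‖s A ω‖ ^ 2 = 1)
    (hαL2 : ∀ q : Fin Q, MemLp (α q) 2 volume)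
    (hαmean : ∀ q : Fin Q, ∫ ω, α q ω = 0)
    (hαabs2 : ∀ q : Fin Q, ∫ ω, ‖α q ω‖ ^ 2 = P q)
    (YISI YICI : Ω → Matrix (Fin N) (Fin M) ℂ)
    (hYISI : ∀ ω, YISI ω = ∑ q ∈ Finset.univ.filter (fun q : Fin Q => Qt ≤ (q : ℕ)),
      α q ω • (Φ q *
        ((Matrix.of fun n m => b (τ q - Tcp) n * (starRingEnd ℂ) (c (fd q) m)) ⊙
          (Matrix.of fun n m => s (n, m) ω)) * J₁))
    (hYICI : ∀ ω, YICI ω = ∑ q ∈ Finset.univ.filter (fun q : Fin Q => Qt ≤ (q : ℕ)),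
      α q ω • (Φ q *
        ((Matrix.of fun n m => b (τ q) n * (starRingEnd ℂ) (c (fd q) m)) ⊙
          (Matrix.of fun n m => s (n, m) ω)))) :
    ∫ ω, Matrix.trace ((YISI ω)ᴴ * YICI ω) = 0 := by
  classical
  have hm : ∀ i : Fin Q ⊕ (Fin N × Fin M), AEStronglyMeasurable (Sum.elim α s i) volume := by
    rintro (q | A)
    · exact (hαL2 q).1
    · exact (hsL4 A).1
  set f' : Fin Q ⊕ (Fin N × Fin M) → Ω → ℂ := fun i => (hm i).mk (Sum.elim α s i) with hf'
  have hf'sm : ∀ i, StronglyMeasurable (f' i) := fun i => (hm i).stronglyMeasurable_mk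
  have hf'eq : ∀ i, Sum.elim α s i =ᵐ[volume] f' i := fun i => (hm i).ae_eq_mk
  have hαeq : ∀ q : Fin Q, α q =ᵐ[volume] f' (Sum.inl q) := fun q => hf'eq (Sum.inl q)
  have hseq : ∀ A : Fin N × Fin M, s A =ᵐ[volume] f' (Sum.inr A) := fun A => hf'eq (Sum.inr A)
  have hindep' : iIndepFun f' volume := iIndepFun_ae_congr hindep hf'eq
  have hα2' : ∀ q : Fin Q, MemLp (f' (Sum.inl q)) 2 volume :=
    fun q => (hαL2 q).ae_eq (hαeq q)
  have hs4' : ∀ A, MemLp (f' (Sum.inr A)) 4 volume := fun A => (hsL4 A).ae_eq (hseq A)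
  have hs2' : ∀ A, MemLp (f' (Sum.inr A)) 2 volume :=
    fun A => (hs4' A).mono_exponent (by norm_num)
  have hgrp2 : ∀ (qa qb : Fin Q) (A B : Fin N × Fin M),
      IndepFun (fun ω => star (f' (Sum.inl qa) ω) * f' (Sum.inl qb) ω)
        (fun ω => star (f' (Sum.inr A) ω) * f' (Sum.inr B) ω) volume := by
    intro qa qb A B
    have hd : Disjoint ({Sum.inl qa, Sum.inl qb} : Finset (Fin Q ⊕ (Fin N × Fin M)))
        {Sum.inr A, Sum.inr B} := by
      simp [Finset.disjoint_left]
    have h1 := hindep'.indepFun_finset _ _ hd (fun i => (hf'sm i).measurable)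
    have hφ : Measurable (fun v : (({Sum.inl qa, Sum.inl qb} :
        Finset (Fin Q ⊕ (Fin N × Fin M))) : Type _) → ℂ =>
        star (v ⟨Sum.inl qa, by simp⟩) * v ⟨Sum.inl qb, by simp⟩) := by refine Measurable.mul ?_ (measurable_pi_apply _); exact continuous_star.measurable.comp (measurable_pi_apply _)
    have hψ : Measurable (fun v : (({Sum.inr A, Sum.inr B} :
        Finset (Fin Q ⊕ (Fin N × Fin M))) : Type _) → ℂ =>
        star (v ⟨Sum.inr A, by simp⟩) * v ⟨Sum.inr B, by simp⟩) := by refine Measurable.mul ?_ (measurable_pi_apply _); exact continuous_star.measurable.comp (measurable_pi_apply _)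
    exact h1.comp hφ hψ
  have hXaInt : ∀ qa qb : Fin Q,
      Integrable (fun ω => star (f' (Sum.inl qa) ω) * f' (Sum.inl qb) ω) volume :=
    fun qa qb => integrable_mul_L2 (memLp_star (hα2' qa)) (hα2' qb)
  have hYbInt : ∀ A B : Fin N × Fin M,
      Integrable (fun ω => star (f' (Sum.inr A) ω) * f' (Sum.inr B) ω) volume :=
    fun A B => integrable_mul_L2 (memLp_star (hs2' A)) (hs2' B)
  have hIntMono : ∀ (qa qb : Fin Q) (A B : Fin N × Fin M),
      Integrable (fun ω => star (α qa ω) * α qb ω * (star (s A ω) * s B ω)) volume := by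
    intro qa qb A B
    have heq : (fun ω => (star (f' (Sum.inl qa) ω) * f' (Sum.inl qb) ω) *
        (star (f' (Sum.inr A) ω) * f' (Sum.inr B) ω)) =ᵐ[volume]
        (fun ω => star (α qa ω) * α qb ω * (star (s A ω) * s B ω)) := by
      filter_upwards [hαeq qa, hαeq qb, hseq A, hseq B] with ω h1 h2 h3 h4
      rw [← h1, ← h2, ← h3, ← h4]
    exact (((hgrp2 qa qb A B).integrable_mul (hXaInt qa qb) (hYbInt A B)).congr heq)
  have key : ∀ (qa qb : Fin Q) (A B : Fin N × Fin M), A ≠ B →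
      ∫ ω, star (α qa ω) * α qb ω * (star (s A ω) * s B ω) = 0 := by
    intro qa qb A B hAB
    have heq : (fun ω => star (α qa ω) * α qb ω * (star (s A ω) * s B ω)) =ᵐ[volume]
        (fun ω => (star (f' (Sum.inl qa) ω) * f' (Sum.inl qb) ω * star (f' (Sum.inr A) ω)) *
          f' (Sum.inr B) ω) := by
      filter_upwards [hαeq qa, hαeq qb, hseq A, hseq B] with ω h1 h2 h3 h4
      rw [← h1, ← h2, ← h3, ← h4]
      ring
    rw [integral_congr_ae heq]
    have hd : Disjoint ({Sum.inl qa, Sum.inl qb, Sum.inr A} :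
        Finset (Fin Q ⊕ (Fin N × Fin M))) {Sum.inr B} := by
      simp only [Finset.disjoint_left, Finset.mem_insert, Finset.mem_singleton]
      rintro x (rfl | rfl | rfl) hx' <;> simp_all
    have h1 := hindep'.indepFun_finset _ _ hd (fun i => (hf'sm i).measurable)
    have hφ : Measurable (fun v : (({Sum.inl qa, Sum.inl qb, Sum.inr A} :
        Finset (Fin Q ⊕ (Fin N × Fin M))) : Type _) → ℂ =>
        star (v ⟨Sum.inl qa, by simp⟩) * v ⟨Sum.inl qb, by simp⟩ *
          star (v ⟨Sum.inr A, by simp⟩)) := by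
      apply Measurable.mul
      · apply Measurable.mul
        · exact continuous_star.measurable.comp (measurable_pi_apply _)
        · exact measurable_pi_apply _
      · exact continuous_star.measurable.comp (measurable_pi_apply _)
    have hψ : Measurable (fun v : (({Sum.inr B} :
        Finset (Fin Q ⊕ (Fin N × Fin M))) : Type _) → ℂ => v ⟨Sum.inr B, by simp⟩) :=
      measurable_pi_apply _
    have hXY : IndepFun (fun ω =>
        star (f' (Sum.inl qa) ω) * f' (Sum.inl qb) ω * star (f' (Sum.inr A) ω))
        (fun ω => f' (Sum.inr B) ω) volume := h1.comp hφ hψ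
    have hXint : Integrable (fun ω =>
        star (f' (Sum.inl qa) ω) * f' (Sum.inl qb) ω * star (f' (Sum.inr A) ω)) volume := by
      have hdA : Disjoint ({Sum.inl qa, Sum.inl qb} : Finset (Fin Q ⊕ (Fin N × Fin M)))
          {Sum.inr A} := by simp [Finset.disjoint_left]
      have h2 := hindep'.indepFun_finset _ _ hdA (fun i => (hf'sm i).measurable)
      have hφ2 : Measurable (fun v : (({Sum.inl qa, Sum.inl qb} :
          Finset (Fin Q ⊕ (Fin N × Fin M))) : Type _) → ℂ =>
          star (v ⟨Sum.inl qa, by simp⟩) * v ⟨Sum.inl qb, by simp⟩) := by refine Measurable.mul ?_ (measurable_pi_apply _); exact continuous_star.measurable.comp (measurable_pi_apply _)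
      have hψ2 : Measurable (fun v : (({Sum.inr A} :
          Finset (Fin Q ⊕ (Fin N × Fin M))) : Type _) → ℂ =>
          star (v ⟨Sum.inr A, by simp⟩)) :=
        continuous_star.measurable.comp (measurable_pi_apply _)
      have h3 : IndepFun (fun ω => star (f' (Sum.inl qa) ω) * f' (Sum.inl qb) ω)
          (fun ω => star (f' (Sum.inr A) ω)) volume := h2.comp hφ2 hψ2
      exact h3.integrable_mul (hXaInt qa qb) ((memLp_star (hs2' A)).integrable (by norm_num))
    have hYint : Integrable (f' (Sum.inr B)) volume := (hs2' B).integrable (by norm_num)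
    rw [indep_integral_cmul hXY hXint hYint]
    have hZ : ∫ ω, f' (Sum.inr B) ω = 0 := by
      rw [← integral_congr_ae (hseq B)]
      exact hsmean B
    rw [hZ, mul_zero]
  have hpoint : ∀ ω, Matrix.trace ((YISI ω)ᴴ * YICI ω) =
      ∑ m : Fin M, ∑ n : Fin N, ∑ q' ∈ Finset.univ.filter (fun q : Fin Q => Qt ≤ (q : ℕ)), ∑ k' : Fin N, ∑ q ∈ Finset.univ.filter (fun q : Fin Q => Qt ≤ (q : ℕ)), ∑ m' : Fin M, ∑ k : Fin N, (star (Φ q n k) * star (b (τ q - Tcp) k) * c (fd q) m' * star (J₁ m' m) * Φ q' n k' * b (τ q') k' * star (c (fd q') m)) * (star (α q ω) * α q' ω * (star (s (k, m') ω) * s (k', m) ω)) := by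
    intro ω
    simp only [hYISI, hYICI, Matrix.trace, Matrix.diag, Matrix.conjTranspose_apply,
      Matrix.mul_apply, Matrix.sum_apply, Matrix.smul_apply, smul_eq_mul, Matrix.hadamard_apply,
      Matrix.of_apply, star_sum, star_mul', star_star, starRingEnd_apply, Finset.sum_mul,
      Finset.mul_sum]
    refine Finset.sum_congr rfl fun m _ => ?_
    refine Finset.sum_congr rfl fun n _ => ?_
    refine Finset.sum_congr rfl fun q' _ => ?_
    refine Finset.sum_congr rfl fun k' _ => ?_
    refine Finset.sum_congr rfl fun q _ => ?_
    refine Finset.sum_congr rfl fun m' _ => ?_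
    refine Finset.sum_congr rfl fun k _ => ?_
    ring
  have hI0 : ∀ (m : Fin M) (n : Fin N) (q' : Fin Q) (k' : Fin N) (q : Fin Q) (m' : Fin M)
      (k : Fin N), Integrable (fun ω => (star (Φ q n k) * star (b (τ q - Tcp) k) * c (fd q) m' * star (J₁ m' m) * Φ q' n k' * b (τ q') k' * star (c (fd q') m)) * (star (α q ω) * α q' ω * (star (s (k, m') ω) * s (k', m) ω))) volume :=
    fun m n q' k' q m' k => (hIntMono q q' (k, m') (k', m)).const_mul _
  have hI1 : ∀ (m : Fin M) (n : Fin N) (q' : Fin Q) (k' : Fin N) (q : Fin Q) (m' : Fin M),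
      Integrable (fun ω => ∑ k : Fin N, (star (Φ q n k) * star (b (τ q - Tcp) k) * c (fd q) m' * star (J₁ m' m) * Φ q' n k' * b (τ q') k' * star (c (fd q') m)) * (star (α q ω) * α q' ω * (star (s (k, m') ω) * s (k', m) ω))) volume :=
    fun m n q' k' q m' => integrable_finset_sum _ fun k _ => hI0 m n q' k' q m' k
  have hI2 : ∀ (m : Fin M) (n : Fin N) (q' : Fin Q) (k' : Fin N) (q : Fin Q),
      Integrable (fun ω => ∑ m' : Fin M, ∑ k : Fin N, (star (Φ q n k) * star (b (τ q - Tcp) k) * c (fd q) m' * star (J₁ m' m) * Φ q' n k' * b (τ q') k' * star (c (fd q') m)) * (star (α q ω) * α q' ω * (star (s (k, m') ω) * s (k', m) ω))) volume :=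
    fun m n q' k' q => integrable_finset_sum _ fun m' _ => hI1 m n q' k' q m'
  have hI3 : ∀ (m : Fin M) (n : Fin N) (q' : Fin Q) (k' : Fin N),
      Integrable (fun ω => ∑ q ∈ Finset.univ.filter (fun q : Fin Q => Qt ≤ (q : ℕ)), ∑ m' : Fin M, ∑ k : Fin N, (star (Φ q n k) * star (b (τ q - Tcp) k) * c (fd q) m' * star (J₁ m' m) * Φ q' n k' * b (τ q') k' * star (c (fd q') m)) * (star (α q ω) * α q' ω * (star (s (k, m') ω) * s (k', m) ω))) volume :=
    fun m n q' k' => integrable_finset_sum _ fun q _ => hI2 m n q' k' q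
  have hI4 : ∀ (m : Fin M) (n : Fin N) (q' : Fin Q),
      Integrable (fun ω => ∑ k' : Fin N, ∑ q ∈ Finset.univ.filter (fun q : Fin Q => Qt ≤ (q : ℕ)), ∑ m' : Fin M, ∑ k : Fin N, (star (Φ q n k) * star (b (τ q - Tcp) k) * c (fd q) m' * star (J₁ m' m) * Φ q' n k' * b (τ q') k' * star (c (fd q') m)) * (star (α q ω) * α q' ω * (star (s (k, m') ω) * s (k', m) ω))) volume :=
    fun m n q' => integrable_finset_sum _ fun k' _ => hI3 m n q' k'
  have hI5 : ∀ (m : Fin M) (n : Fin N),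
      Integrable (fun ω => ∑ q' ∈ Finset.univ.filter (fun q : Fin Q => Qt ≤ (q : ℕ)), ∑ k' : Fin N, ∑ q ∈ Finset.univ.filter (fun q : Fin Q => Qt ≤ (q : ℕ)), ∑ m' : Fin M, ∑ k : Fin N, (star (Φ q n k) * star (b (τ q - Tcp) k) * c (fd q) m' * star (J₁ m' m) * Φ q' n k' * b (τ q') k' * star (c (fd q') m)) * (star (α q ω) * α q' ω * (star (s (k, m') ω) * s (k', m) ω))) volume :=
    fun m n => integrable_finset_sum _ fun q' _ => hI4 m n q'
  have hI6 : ∀ (m : Fin M),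
      Integrable (fun ω => ∑ n : Fin N, ∑ q' ∈ Finset.univ.filter (fun q : Fin Q => Qt ≤ (q : ℕ)), ∑ k' : Fin N, ∑ q ∈ Finset.univ.filter (fun q : Fin Q => Qt ≤ (q : ℕ)), ∑ m' : Fin M, ∑ k : Fin N, (star (Φ q n k) * star (b (τ q - Tcp) k) * c (fd q) m' * star (J₁ m' m) * Φ q' n k' * b (τ q') k' * star (c (fd q') m)) * (star (α q ω) * α q' ω * (star (s (k, m') ω) * s (k', m) ω))) volume :=
    fun m => integrable_finset_sum _ fun n _ => hI5 m n
  simp only [hpoint]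
  rw [integral_finset_sum _ fun m _ => hI6 m]
  refine Finset.sum_eq_zero fun m _ => ?_
  rw [integral_finset_sum _ fun n _ => hI5 m n]
  refine Finset.sum_eq_zero fun n _ => ?_
  rw [integral_finset_sum _ fun q' _ => hI4 m n q']
  refine Finset.sum_eq_zero fun q' _ => ?_
  rw [integral_finset_sum _ fun k' _ => hI3 m n q' k']
  refine Finset.sum_eq_zero fun k' _ => ?_
  rw [integral_finset_sum _ fun q _ => hI2 m n q' k' q]
  refine Finset.sum_eq_zero fun q _ => ?_
  rw [integral_finset_sum _ fun m' _ => hI1 m n q' k' q m']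
  refine Finset.sum_eq_zero fun m' _ => ?_
  rw [integral_finset_sum _ fun k _ => hI0 m n q' k' q m' k]
  refine Finset.sum_eq_zero fun k _ => ?_
  rw [integral_const_mul]
  by_cases hmm : m' = m
  · subst hmm
    have hz : J₁ m' m' = 0 := by
      rw [hJ]
      simp
    simp [hz]
  · have hne : ((k, m') : Fin N × Fin M) ≠ (k', m) := by
      intro h
      exact hmm (congrArg Prod.snd h)
    rw [key q q' (k, m') (k', m) hne, mul_zero]
end

section
/- For all integers l and ν, the ISI and ICI components of the range-Doppler map are uncorrelated: E[χ_ISI(l,ν)·conj(χ_ICI(l,ν))] = 0. -/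
open MeasureTheory ProbabilityTheory Complex Finset Matrix


lemma measurable_conj' : Measurable (fun z : ℂ => (starRingEnd ℂ) z) :=
  (RCLike.continuous_conj).measurable

lemma memLp_conj {Ω : Type*} [MeasureSpace Ω] {p : ENNReal} {f : Ω → ℂ}
    (hf : MemLp f p volume) : MemLp (fun ω => (starRingEnd ℂ) (f ω)) p volume := by
  refine ⟨(RCLike.continuous_conj).comp_aestronglyMeasurable hf.1, ?_⟩
  have : eLpNorm (fun ω => (starRingEnd ℂ) (f ω)) p volume = eLpNorm f p volume := by
    rw [← eLpNorm_norm (fun ω => (starRingEnd ℂ) (f ω))]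
    simp only [RCLike.norm_conj]
    exact eLpNorm_norm f
  rw [this]; exact hf.2

lemma iIndepFun_ae_eq' {Ω ι : Type*} [MeasurableSpace Ω] {μ : Measure Ω} {β : ι → Type*}
    {m : ∀ i, MeasurableSpace (β i)} {f g : ∀ i, Ω → β i}
    (hf : iIndepFun f μ) (h : ∀ i, f i =ᵐ[μ] g i) : iIndepFun g μ := by
  rw [iIndepFun_iff_measure_inter_preimage_eq_mul] at hf ⊢
  intro S sets H
  have hS : ∀ᵐ ω ∂μ, ∀ i ∈ S, f i ω = g i ω :=
    (MeasureTheory.ae_ball_iff S.countable_toSet).2 (fun i _ => h i)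
  have e1 : μ (⋂ i ∈ S, g i ⁻¹' sets i) = μ (⋂ i ∈ S, f i ⁻¹' sets i) := by
    refine measure_congr ?_
    rw [Filter.eventuallyEq_set]
    filter_upwards [hS] with ω hω
    simp only [Set.mem_iInter, Set.mem_preimage]
    exact ⟨fun H' i hi => (hω i hi) ▸ H' i hi, fun H' i hi => (hω i hi).symm ▸ H' i hi⟩
  rw [e1, hf S H]
  refine Finset.prod_congr rfl (fun i hi => ?_)
  refine measure_congr ?_
  rw [Filter.eventuallyEq_set]
  filter_upwards [h i] with ω hω
  simp only [Set.mem_preimage, hω]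

lemma integral_mul_complex {Ω : Type*} [MeasureSpace Ω] [IsProbabilityMeasure (volume : Measure Ω)]
    {X Y : Ω → ℂ} (h : IndepFun X Y volume) (hX : Integrable X volume) (hY : Integrable Y volume) :
    ∫ ω, X ω * Y ω = (∫ ω, X ω) * ∫ ω, Y ω := by
  have hXY : Integrable (fun ω => X ω * Y ω) volume := h.integrable_mul hX hY
  have mre : Measurable (fun z : ℂ => z.re) := Complex.measurable_re
  have mim : Measurable (fun z : ℂ => z.im) := Complex.measurable_im
  have hrr : ∫ ω, (X ω).re * (Y ω).re = (∫ ω, (X ω).re) * ∫ ω, (Y ω).re := by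
    simpa [Function.comp_def, Pi.mul_apply, MeasureTheory.integral] using
      (h.comp mre mre).integral_mul_eq_mul_integral hX.re.aestronglyMeasurable hY.re.aestronglyMeasurable
  have hri : ∫ ω, (X ω).re * (Y ω).im = (∫ ω, (X ω).re) * ∫ ω, (Y ω).im := by
    simpa [Function.comp_def, Pi.mul_apply] using
      (h.comp mre mim).integral_mul_eq_mul_integral hX.re.aestronglyMeasurable hY.im.aestronglyMeasurable
  have hir : ∫ ω, (X ω).im * (Y ω).re = (∫ ω, (X ω).im) * ∫ ω, (Y ω).re := by
    simpa [Function.comp_def, Pi.mul_apply] using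
      (h.comp mim mre).integral_mul_eq_mul_integral hX.im.aestronglyMeasurable hY.re.aestronglyMeasurable
  have hii : ∫ ω, (X ω).im * (Y ω).im = (∫ ω, (X ω).im) * ∫ ω, (Y ω).im := by
    simpa [Function.comp_def, Pi.mul_apply] using
      (h.comp mim mim).integral_mul_eq_mul_integral hX.im.aestronglyMeasurable hY.im.aestronglyMeasurable
  have irr : Integrable (fun ω => (X ω).re * (Y ω).re) volume := by
    simpa [Function.comp_def, Pi.mul_def] using ((h.comp mre mre).integrable_mul hX.re hY.re)
  have iri : Integrable (fun ω => (X ω).re * (Y ω).im) volume := by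
    simpa [Function.comp_def, Pi.mul_def] using ((h.comp mre mim).integrable_mul hX.re hY.im)
  have iir : Integrable (fun ω => (X ω).im * (Y ω).re) volume := by
    simpa [Function.comp_def, Pi.mul_def] using ((h.comp mim mre).integrable_mul hX.im hY.re)
  have iii : Integrable (fun ω => (X ω).im * (Y ω).im) volume := by
    simpa [Function.comp_def, Pi.mul_def] using ((h.comp mim mim).integrable_mul hX.im hY.im)
  apply Complex.ext
  · have : (∫ ω, X ω * Y ω).re = ∫ ω, (X ω * Y ω).re := by
      rw [← RCLike.re_to_complex]
      rw [← integral_re hXY]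
      simp [RCLike.re_to_complex]
    rw [this]
    simp only [Complex.mul_re]
    rw [integral_sub irr iii, hrr, hii]
    have e1 : (∫ ω, (X ω).re) = (∫ ω, X ω).re := by
      rw [← RCLike.re_to_complex, ← integral_re hX]; simp [RCLike.re_to_complex]
    have e2 : (∫ ω, (Y ω).re) = (∫ ω, Y ω).re := by
      rw [← RCLike.re_to_complex, ← integral_re hY]; simp [RCLike.re_to_complex]
    have e3 : (∫ ω, (X ω).im) = (∫ ω, X ω).im := by
      rw [← RCLike.im_to_complex, ← integral_im hX]; simp [RCLike.im_to_complex]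
    have e4 : (∫ ω, (Y ω).im) = (∫ ω, Y ω).im := by
      rw [← RCLike.im_to_complex, ← integral_im hY]; simp [RCLike.im_to_complex]
    rw [e1, e2, e3, e4]
  · have : (∫ ω, X ω * Y ω).im = ∫ ω, (X ω * Y ω).im := by
      rw [← RCLike.im_to_complex, ← integral_im hXY]
      simp [RCLike.im_to_complex]
    rw [this]
    simp only [Complex.mul_im]
    rw [integral_add iri iir, hri, hir]
    have e1 : (∫ ω, (X ω).re) = (∫ ω, X ω).re := by
      rw [← RCLike.re_to_complex, ← integral_re hX]; simp [RCLike.re_to_complex]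
    have e2 : (∫ ω, (Y ω).re) = (∫ ω, Y ω).re := by
      rw [← RCLike.re_to_complex, ← integral_re hY]; simp [RCLike.re_to_complex]
    have e3 : (∫ ω, (X ω).im) = (∫ ω, X ω).im := by
      rw [← RCLike.im_to_complex, ← integral_im hX]; simp [RCLike.im_to_complex]
    have e4 : (∫ ω, (Y ω).im) = (∫ ω, Y ω).im := by
      rw [← RCLike.im_to_complex, ← integral_im hY]; simp [RCLike.im_to_complex]
    rw [e1, e2, e3, e4]

lemma isum_zero {Ω : Type*} [MeasureSpace Ω] {ι : Type*} (t : Finset ι) (f : ι → Ω → ℂ)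
    (h : ∀ i ∈ t, Integrable (f i) volume ∧ ∫ ω, f i ω = 0) :
    Integrable (fun ω => ∑ i ∈ t, f i ω) volume ∧ ∫ ω, (∑ i ∈ t, f i ω) = 0 := by
  refine ⟨integrable_finset_sum t (fun i hi => (h i hi).1), ?_⟩
  rw [integral_finset_sum t (fun i hi => (h i hi).1)]
  exact Finset.sum_eq_zero (fun i hi => (h i hi).2)


noncomputable def cst (b : Bool) : ℂ → ℂ := if b then (starRingEnd ℂ) else id

lemma mcst (b : Bool) : Measurable (cst b) := by
  cases b
  · simpa [cst] using measurable_id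
  · simpa [cst] using (RCLike.continuous_conj (K := ℂ)).measurable


lemma memLp_cst {Ω : Type*} [MeasureSpace Ω] {p : ENNReal} {f : Ω → ℂ} (b : Bool)
    (hf : MemLp f p volume) : MemLp (fun ω => cst b (f ω)) p volume := by
  cases b
  · simpa [cst] using hf
  · simpa [cst] using memLp_conj hf


lemma een1 : (1 : ENNReal) / 1 = 1/2 + 1/2 := by
  rw [ENNReal.div_add_div_same]
  rw [ENNReal.div_eq_div_iff (by norm_num) (by norm_num) (by norm_num) (by norm_num)]
  norm_num
lemma een2 : (1 : ENNReal) / 2 = 1/4 + 1/4 := by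
  rw [ENNReal.div_add_div_same]
  rw [ENNReal.div_eq_div_iff (by norm_num) (by norm_num) (by norm_num) (by norm_num)]
  norm_num

lemma mega {ιn ιm ιq ιk ιp ιj : Type*}
    (sn : Finset ιn) (sm : Finset ιm) (sq : Finset ιq) (sk : Finset ιk)
    (sp : Finset ιp) (sj : Finset ιj)
    (c c' : ℂ) (f : ιq → ιm → ℂ) (U : ιq → ιk → ιm → ιn → ℂ)
    (f' : ιp → ιm → ℂ) (U' : ιp → ιj → ιm → ιn → ℂ)
    (a a' : ιn → ιm → ℂ) (e : ιn → ℂ) (E : ιm → ℂ) :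
    (c * ∑ n ∈ sn, ∑ m ∈ sm, (∑ q ∈ sq, f q m * ∑ k ∈ sk, U q k m n) * a n m * e n * E m) *
    (starRingEnd ℂ) (c' * ∑ n ∈ sn, ∑ m ∈ sm,
      (∑ p ∈ sp, f' p m * ∑ j ∈ sj, U' p j m n) * a' n m * e n * E m) =
    ∑ n' ∈ sn, ∑ m' ∈ sm, ∑ p ∈ sp, ∑ j ∈ sj, ∑ n ∈ sn, ∑ m ∈ sm, ∑ q ∈ sq, ∑ k ∈ sk,
      c * (starRingEnd ℂ) c' * (f q m * U q k m n) *
        (starRingEnd ℂ) (f' p m' * U' p j m' n') * a n m * (starRingEnd ℂ) (a' n' m') *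
        e n * E m * (starRingEnd ℂ) (e n') * (starRingEnd ℂ) (E m') := by
  simp only [_root_.map_mul, _root_.map_sum, Finset.mul_sum, Finset.sum_mul]
  refine Finset.sum_congr rfl fun n' _ => Finset.sum_congr rfl fun m' _ =>
    Finset.sum_congr rfl fun p _ => Finset.sum_congr rfl fun j _ =>
    Finset.sum_congr rfl fun n _ => Finset.sum_congr rfl fun m _ =>
    Finset.sum_congr rfl fun q _ => Finset.sum_congr rfl fun k _ => ?_
  ring

lemma master {Ω : Type*} [MeasureSpace Ω] [IsProbabilityMeasure (volume : Measure Ω)]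
    {N M Q : ℕ}
    (s : Fin N × Fin (M + 1) → Ω → ℂ) (α : Fin Q → Ω → ℂ)
    (hindep : iIndepFun (Sum.elim α s) volume)
    (hsL4 : ∀ A, MemLp (s A) 4 volume)
    (hsmean : ∀ A, ∫ ω, s A ω = 0)
    (hαL2 : ∀ q, MemLp (α q) 2 volume)
    (q q' : Fin Q) (B C1 C2 C3 : Fin N × Fin (M + 1))
    (h1 : B ≠ C1) (h2 : B ≠ C2) (h3 : B ≠ C3)
    (b b1 b2 b3 : Bool) :
    Integrable (fun ω => cst b (s B ω) * (α q ω * (starRingEnd ℂ) (α q' ω) *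
      (cst b1 (s C1 ω) * (cst b2 (s C2 ω) * cst b3 (s C3 ω))))) volume ∧
    ∫ ω, cst b (s B ω) * (α q ω * (starRingEnd ℂ) (α q' ω) *
      (cst b1 (s C1 ω) * (cst b2 (s C2 ω) * cst b3 (s C3 ω)))) = 0 := by
  classical
  -- measurable modifications
  have hsm : ∀ A, AEStronglyMeasurable (s A) volume := fun A => (hsL4 A).1
  have hαm : ∀ p, AEStronglyMeasurable (α p) volume := fun p => (hαL2 p).1
  set s₀ : Fin N × Fin (M + 1) → Ω → ℂ := fun A => (hsm A).mk (s A) with hs₀def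
  set α₀ : Fin Q → Ω → ℂ := fun p => (hαm p).mk (α p) with hα₀def
  have hs₀meas : ∀ A, Measurable (s₀ A) :=
    fun A => (hsm A).stronglyMeasurable_mk.measurable
  have hα₀meas : ∀ p, Measurable (α₀ p) :=
    fun p => (hαm p).stronglyMeasurable_mk.measurable
  have hs₀ae : ∀ A, s A =ᵐ[volume] s₀ A := fun A => (hsm A).ae_eq_mk
  have hα₀ae : ∀ p, α p =ᵐ[volume] α₀ p := fun p => (hαm p).ae_eq_mk
  have hs₀L4 : ∀ A, MemLp (s₀ A) 4 volume := fun A => (hsL4 A).ae_eq (hs₀ae A)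
  have hα₀L2 : ∀ p, MemLp (α₀ p) 2 volume := fun p => (hαL2 p).ae_eq (hα₀ae p)
  have hs₀mean : ∀ A, ∫ ω, s₀ A ω = 0 := by
    intro A; rw [← integral_congr_ae (hs₀ae A)]; exact hsmean A
  set F : (Fin Q ⊕ (Fin N × Fin (M + 1))) → Ω → ℂ := Sum.elim α₀ s₀ with hFdef
  have hFmeas : ∀ i, Measurable (F i) := by
    rintro (p | A)
    · exact hα₀meas p
    · exact hs₀meas A
  have hFindep : iIndepFun F volume := by
    refine iIndepFun_ae_eq' hindep ?_
    rintro (p | A)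
    · exact hα₀ae p
    · exact hs₀ae A
  -- L^p facts for cst-composed variables
  have c4 : ∀ (bb : Bool) A, MemLp (fun ω => cst bb (s₀ A ω)) 4 volume :=
    fun bb A => memLp_cst bb (hs₀L4 A)
  -- define X and Y
  set X : Ω → ℂ := fun ω => cst b (s₀ B ω) with hXdef
  set Y : Ω → ℂ := fun ω => α₀ q ω * (starRingEnd ℂ) (α₀ q' ω) *
      (cst b1 (s₀ C1 ω) * (cst b2 (s₀ C2 ω) * cst b3 (s₀ C3 ω))) with hYdef
  -- integrability of X
  have hX1 : Integrable X volume := (c4 b B).integrable (by norm_num)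
  -- integrability of the alpha part
  have hA2 : Integrable (fun ω => α₀ q ω * (starRingEnd ℂ) (α₀ q' ω)) volume := by
    rw [← memLp_one_iff_integrable]
    have := MemLp.smul (memLp_conj (hα₀L2 q')) (hα₀L2 q) (r := 1) (hpqr := ⟨by simpa [one_div] using een1.symm⟩)
    simpa [smul_eq_mul, Pi.smul_apply', Pi.smul_def, Pi.mul_def] using this
  -- integrability of the s part
  have hS3 : Integrable (fun ω => cst b1 (s₀ C1 ω) * (cst b2 (s₀ C2 ω) * cst b3 (s₀ C3 ω)))
      volume := by
    rw [← memLp_one_iff_integrable]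
    have p23 : MemLp (fun ω => cst b2 (s₀ C2 ω) * cst b3 (s₀ C3 ω)) 2 volume := by
      have := MemLp.smul (c4 b3 C3) (c4 b2 C2) (r := 2) (hpqr := ⟨by simpa [one_div] using een2.symm⟩)
      simpa [smul_eq_mul, Pi.mul_def] using this
    have p1 : MemLp (fun ω => cst b1 (s₀ C1 ω)) 2 volume :=
      (c4 b1 C1).mono_exponent (by norm_num)
    have := MemLp.smul p23 p1 (r := 1) (hpqr := ⟨by simpa [one_div] using een1.symm⟩)
    simpa [smul_eq_mul, Pi.mul_def] using this
  -- independence of the alpha part and s part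
  have hAS : IndepFun (fun ω => α₀ q ω * (starRingEnd ℂ) (α₀ q' ω))
      (fun ω => cst b1 (s₀ C1 ω) * (cst b2 (s₀ C2 ω) * cst b3 (s₀ C3 ω))) volume := by
    have hd : Disjoint ({Sum.inl q, Sum.inl q'} :
        Finset (Fin Q ⊕ (Fin N × Fin (M + 1))))
        ({Sum.inr C1, Sum.inr C2, Sum.inr C3} : Finset (Fin Q ⊕ (Fin N × Fin (M + 1)))) := by
      simp [Finset.disjoint_left]
    have base := hFindep.indepFun_finset _ _ hd hFmeas
    have hφ : Measurable (fun (v : ({Sum.inl q, Sum.inl q'} :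
        Finset (Fin Q ⊕ (Fin N × Fin (M + 1)))) → ℂ) =>
        v ⟨Sum.inl q, by simp⟩ * (starRingEnd ℂ) (v ⟨Sum.inl q', by simp⟩)) :=
      (measurable_pi_apply _).mul (measurable_conj'.comp (measurable_pi_apply _))
    have hψ : Measurable (fun (v : ({Sum.inr C1, Sum.inr C2, Sum.inr C3} :
        Finset (Fin Q ⊕ (Fin N × Fin (M + 1)))) → ℂ) =>
        cst b1 (v ⟨Sum.inr C1, by simp⟩) * (cst b2 (v ⟨Sum.inr C2, by simp⟩) *
          cst b3 (v ⟨Sum.inr C3, by simp⟩))) :=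
      ((mcst b1).comp (measurable_pi_apply _)).mul
        (((mcst b2).comp (measurable_pi_apply _)).mul ((mcst b3).comp (measurable_pi_apply _)))
    exact base.comp hφ hψ
  have hYint : Integrable Y volume := by
    have := hAS.integrable_mul hA2 hS3
    simpa [hYdef, Pi.mul_apply, Pi.mul_def] using this
  -- independence of X and Y
  have hXY : IndepFun X Y volume := by
    have hd : Disjoint ({Sum.inr B} : Finset (Fin Q ⊕ (Fin N × Fin (M + 1))))
        ({Sum.inl q, Sum.inl q', Sum.inr C1, Sum.inr C2, Sum.inr C3} :
          Finset (Fin Q ⊕ (Fin N × Fin (M + 1)))) := by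
      simp [Finset.disjoint_left, h1, h2, h3]
    have base := hFindep.indepFun_finset _ _ hd hFmeas
    have hφ : Measurable (fun (v : ({Sum.inr B} :
        Finset (Fin Q ⊕ (Fin N × Fin (M + 1)))) → ℂ) =>
        cst b (v ⟨Sum.inr B, by simp⟩)) := (mcst b).comp (measurable_pi_apply _)
    have hψ : Measurable (fun (v : ({Sum.inl q, Sum.inl q', Sum.inr C1, Sum.inr C2, Sum.inr C3} :
        Finset (Fin Q ⊕ (Fin N × Fin (M + 1)))) → ℂ) =>
        v ⟨Sum.inl q, by simp⟩ * (starRingEnd ℂ) (v ⟨Sum.inl q', by simp⟩) *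
          (cst b1 (v ⟨Sum.inr C1, by simp⟩) * (cst b2 (v ⟨Sum.inr C2, by simp⟩) *
            cst b3 (v ⟨Sum.inr C3, by simp⟩)))) := by
      refine Measurable.mul ?_ ?_
      · exact (measurable_pi_apply _).mul (measurable_conj'.comp (measurable_pi_apply _))
      · exact ((mcst b1).comp (measurable_pi_apply _)).mul
          (((mcst b2).comp (measurable_pi_apply _)).mul ((mcst b3).comp (measurable_pi_apply _)))
    exact base.comp hφ hψ
  -- zero mean of X
  have hX0 : ∫ ω, X ω = 0 := by
    cases b
    · simp only [hXdef, cst, Bool.false_eq_true, if_neg, id]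
      simpa using hs₀mean B
    · simp only [hXdef, cst, if_pos]
      rw [integral_conj]
      simp [hs₀mean B]
  -- combine
  have hae : (fun ω => cst b (s B ω) * (α q ω * (starRingEnd ℂ) (α q' ω) *
      (cst b1 (s C1 ω) * (cst b2 (s C2 ω) * cst b3 (s C3 ω)))))
      =ᵐ[volume] (fun ω => X ω * Y ω) := by
    filter_upwards [hs₀ae B, hs₀ae C1, hs₀ae C2, hs₀ae C3, hα₀ae q, hα₀ae q'] with ω e1 e2 e3 e4
      e5 e6
    rw [hXdef, hYdef]
    simp only [e1, e2, e3, e4, e5, e6]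
  have hint : Integrable (fun ω => X ω * Y ω) volume := by
    have := hXY.integrable_mul hX1 hYint
    simpa [Pi.mul_apply, Pi.mul_def] using this
  constructor
  · exact hint.congr hae.symm
  · rw [integral_congr_ae hae, integral_mul_complex hXY hX1 hYint, hX0, zero_mul]

/-- ISI and ICI RDM components are uncorrelated. -/
theorem stmt13 {Ω : Type*} [MeasureSpace Ω] [IsProbabilityMeasure (volume : Measure Ω)]
    (N M : ℕ) (hN : 0 < N) (hM : 0 < M)
    (Δf Ts Tcp : ℝ) (hΔf : 0 < Δf) (hTs : 0 < Ts) (hTcp : 0 < Tcp) (Ncp : ℕ)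
    (Q : ℕ) (hQ : 1 ≤ Q)
    (τ fd : Fin Q → ℝ) (P : Fin Q → ℝ) (l : Fin Q → ℤ)
    (Qt : ℕ) (hQt : Qt ≤ Q)
    (hl : ∀ q : Fin Q, Qt ≤ (q : ℕ) → (Ncp : ℤ) < l q ∧ l q ≤ (N : ℤ) + (Ncp : ℤ))
    (ρ : Fin Q → ℝ) (hρ : ∀ q : Fin Q, ρ q = ((l q : ℝ) - (Ncp : ℝ)) / (N : ℝ))
    (Φ : Fin Q → Matrix (Fin N) (Fin N) ℂ)
    (hΦ : ∀ q : Fin Q, Qt ≤ (q : ℕ) → ∀ n n' : Fin N,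
      Φ q n n' = (1 / (N : ℂ)) * ∑ i ∈ Finset.range (l q - (Ncp : ℤ)).toNat,
        Complex.exp (2 * (Real.pi : ℂ) * Complex.I *
          (((n' : ℕ) : ℂ) - ((n : ℕ) : ℂ)) * (i : ℂ) / (N : ℂ)))
    (s : Fin N × Fin (M + 1) → Ω → ℂ) (α : Fin Q → Ω → ℂ) (μ₄ : ℝ)
    (hindep : iIndepFun (Sum.elim α s) volume)
    (hident : ∀ A B : Fin N × Fin (M + 1), IdentDistrib (s A) (s B) volume volume)
    (hsL4 : ∀ A : Fin N × Fin (M + 1), MemLp (s A) 4 volume)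
    (hsmean : ∀ A : Fin N × Fin (M + 1), ∫ ω, s A ω = 0)
    (hssq : ∀ A : Fin N × Fin (M + 1), ∫ ω, (s A ω) ^ 2 = 0)
    (hsabs2 : ∀ A : Fin N × Fin (M + 1), ∫ ω, ‖s A ω‖ ^ 2 = 1)
    (hsabs4 : ∀ A : Fin N × Fin (M + 1), ∫ ω, ‖s A ω‖ ^ 4 = μ₄)
    (hαL2 : ∀ q : Fin Q, MemLp (α q) 2 volume)
    (hαmean : ∀ q : Fin Q, ∫ ω, α q ω = 0)
    (hαabs2 : ∀ q : Fin Q, ∫ ω, ‖α q ω‖ ^ 2 = P q)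
    (yISI : Ω → Fin N → Fin M → ℂ)
    (hyISI : ∀ (ω : Ω) (n : Fin N) (m : Fin M), yISI ω n m =
      ∑ q ∈ Finset.univ.filter (fun q : Fin Q => Qt ≤ (q : ℕ)), α q ω *
        Complex.exp (2 * (Real.pi : ℂ) * Complex.I * (((m : ℕ) : ℂ) - 1) * ((fd q : ℝ) : ℂ) * (Ts : ℂ)) *
        ∑ n' : Fin N, s (n', m.castSucc) ω *
          Complex.exp (2 * (Real.pi : ℂ) * Complex.I * ((n' : ℕ) : ℂ) * (Δf : ℂ) * ((Tcp : ℝ) - τ q : ℝ)) *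
          Φ q n n')
    (yICI : Ω → Fin N → Fin M → ℂ)
    (hyICI : ∀ (ω : Ω) (n : Fin N) (m : Fin M), yICI ω n m =
      ∑ q ∈ Finset.univ.filter (fun q : Fin Q => Qt ≤ (q : ℕ)), α q ω *
        Complex.exp (2 * (Real.pi : ℂ) * Complex.I * ((m : ℕ) : ℂ) * ((fd q : ℝ) : ℂ) * (Ts : ℂ)) *
        ∑ n' : Fin N, s (n', m.succ) ω *
          Complex.exp (-(2 * (Real.pi : ℂ) * Complex.I * ((n' : ℕ) : ℂ) * (Δf : ℂ) * ((τ q : ℝ) : ℂ))) *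
          Φ q n n')
    (χISI : ℤ → ℤ → Ω → ℂ)
    (hχISI : ∀ (lv νv : ℤ) (ω : Ω), χISI lv νv ω =
      ((1 / Real.sqrt ((M : ℝ) * (N : ℝ)) : ℝ) : ℂ) *
      ∑ n : Fin N, ∑ m : Fin M, yISI ω n m * (starRingEnd ℂ) (s (n, m.succ) ω) *
        Complex.exp (2 * (Real.pi : ℂ) * Complex.I * ((n : ℕ) : ℂ) * (lv : ℂ) / (N : ℂ)) *
        Complex.exp (-(2 * (Real.pi : ℂ) * Complex.I * ((m : ℕ) : ℂ) * (νv : ℂ) / (M : ℂ))))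
    (χICI : ℤ → ℤ → Ω → ℂ)
    (hχICI : ∀ (lv νv : ℤ) (ω : Ω), χICI lv νv ω =
      ((1 / Real.sqrt ((M : ℝ) * (N : ℝ)) : ℝ) : ℂ) *
      ∑ n : Fin N, ∑ m : Fin M, yICI ω n m * (starRingEnd ℂ) (s (n, m.succ) ω) *
        Complex.exp (2 * (Real.pi : ℂ) * Complex.I * ((n : ℕ) : ℂ) * (lv : ℂ) / (N : ℂ)) *
        Complex.exp (-(2 * (Real.pi : ℂ) * Complex.I * ((m : ℕ) : ℂ) * (νv : ℂ) / (M : ℂ))))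
    : ∀ lv νv : ℤ,
      ∫ ω, χISI lv νv ω * (starRingEnd ℂ) (χICI lv νv ω) = 0 := by
  intro lv νv
  classical
  -- notation for the filter set
  set filt : Finset (Fin Q) := Finset.univ.filter (fun q : Fin Q => Qt ≤ (q : ℕ)) with hfilt
  -- Step 1: pointwise expansion of the product into an 8-fold sum of atoms
  have claim1 : ∀ ω : Ω, χISI lv νv ω * (starRingEnd ℂ) (χICI lv νv ω) =
      ∑ n' : Fin N, ∑ m' : Fin M, ∑ p ∈ filt, ∑ j : Fin N,
      ∑ n : Fin N, ∑ m : Fin M, ∑ q ∈ filt, ∑ k : Fin N,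
        ((1 / Real.sqrt ((M : ℝ) * (N : ℝ)) : ℝ) : ℂ) *
        (starRingEnd ℂ) ((1 / Real.sqrt ((M : ℝ) * (N : ℝ)) : ℝ) : ℂ) *
        ((α q ω * Complex.exp (2 * (Real.pi : ℂ) * Complex.I * (((m : ℕ) : ℂ) - 1) *
            ((fd q : ℝ) : ℂ) * (Ts : ℂ))) *
         (s (k, m.castSucc) ω * Complex.exp (2 * (Real.pi : ℂ) * Complex.I * ((k : ℕ) : ℂ) *
            (Δf : ℂ) * ((Tcp : ℝ) - τ q : ℝ)) * Φ q n k)) *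
        (starRingEnd ℂ) ((α p ω * Complex.exp (2 * (Real.pi : ℂ) * Complex.I * ((m' : ℕ) : ℂ) *
            ((fd p : ℝ) : ℂ) * (Ts : ℂ))) *
         (s (j, m'.succ) ω * Complex.exp (-(2 * (Real.pi : ℂ) * Complex.I * ((j : ℕ) : ℂ) *
            (Δf : ℂ) * ((τ p : ℝ) : ℂ))) * Φ p n' j)) *
        (starRingEnd ℂ) (s (n, m.succ) ω) *
        (starRingEnd ℂ) ((starRingEnd ℂ) (s (n', m'.succ) ω)) *
        Complex.exp (2 * (Real.pi : ℂ) * Complex.I * ((n : ℕ) : ℂ) * (lv : ℂ) / (N : ℂ)) *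
        Complex.exp (-(2 * (Real.pi : ℂ) * Complex.I * ((m : ℕ) : ℂ) * (νv : ℂ) / (M : ℂ))) *
        (starRingEnd ℂ) (Complex.exp (2 * (Real.pi : ℂ) * Complex.I * ((n' : ℕ) : ℂ) *
          (lv : ℂ) / (N : ℂ))) *
        (starRingEnd ℂ) (Complex.exp (-(2 * (Real.pi : ℂ) * Complex.I * ((m' : ℕ) : ℂ) *
          (νv : ℂ) / (M : ℂ)))) := by
    intro ω
    rw [hχISI lv νv ω, hχICI lv νv ω]
    simp only [hyISI, hyICI]
    exact mega (Finset.univ : Finset (Fin N)) (Finset.univ : Finset (Fin M)) filt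
      (Finset.univ : Finset (Fin N)) filt (Finset.univ : Finset (Fin N))
      ((1 / Real.sqrt ((M : ℝ) * (N : ℝ)) : ℝ) : ℂ)
      ((1 / Real.sqrt ((M : ℝ) * (N : ℝ)) : ℝ) : ℂ)
      (fun q m => α q ω * Complex.exp (2 * (Real.pi : ℂ) * Complex.I * (((m : ℕ) : ℂ) - 1) *
        ((fd q : ℝ) : ℂ) * (Ts : ℂ)))
      (fun q k m n => s (k, m.castSucc) ω * Complex.exp (2 * (Real.pi : ℂ) * Complex.I *
        ((k : ℕ) : ℂ) * (Δf : ℂ) * ((Tcp : ℝ) - τ q : ℝ)) * Φ q n k)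
      (fun p m => α p ω * Complex.exp (2 * (Real.pi : ℂ) * Complex.I * ((m : ℕ) : ℂ) *
        ((fd p : ℝ) : ℂ) * (Ts : ℂ)))
      (fun p j m n => s (j, m.succ) ω * Complex.exp (-(2 * (Real.pi : ℂ) * Complex.I *
        ((j : ℕ) : ℂ) * (Δf : ℂ) * ((τ p : ℝ) : ℂ))) * Φ p n j)
      (fun n m => (starRingEnd ℂ) (s (n, m.succ) ω))
      (fun n m => (starRingEnd ℂ) (s (n, m.succ) ω))
      (fun n => Complex.exp (2 * (Real.pi : ℂ) * Complex.I * ((n : ℕ) : ℂ) * (lv : ℂ) / (N : ℂ)))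
      (fun m => Complex.exp (-(2 * (Real.pi : ℂ) * Complex.I * ((m : ℕ) : ℂ) * (νv : ℂ) / (M : ℂ))))
  -- helper inequalities on Fin indices
  have hCS : ∀ (x y : Fin M), (x : ℕ) ≠ (y : ℕ) + 1 →
      ∀ (i i' : Fin N), ((i, x.castSucc) : Fin N × Fin (M + 1)) ≠ (i', y.succ) := by
    intro x y hxy i i' h
    apply hxy
    have h2 := congrArg Prod.snd h
    simpa [Fin.ext_iff] using h2
  have hSC : ∀ (x y : Fin M), (x : ℕ) + 1 ≠ (y : ℕ) →
      ∀ (i i' : Fin N), ((i, x.succ) : Fin N × Fin (M + 1)) ≠ (i', y.castSucc) := by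
    intro x y hxy i i' h
    apply hxy
    have h2 := congrArg Prod.snd h
    simpa [Fin.ext_iff] using h2
  have hSS : ∀ (x y : Fin M), (x : ℕ) ≠ (y : ℕ) →
      ∀ (i i' : Fin N), ((i, x.succ) : Fin N × Fin (M + 1)) ≠ (i', y.succ) := by
    intro x y hxy i i' h
    apply hxy
    have h2 := congrArg Prod.snd h
    simpa [Fin.ext_iff] using h2
  -- Step 2: rewrite the integrand and integrate term by term
  simp only [claim1]
  refine (isum_zero _ _ ?_).2
  intro n' _
  refine isum_zero _ _ ?_
  intro m' _
  refine isum_zero _ _ ?_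
  intro p _
  refine isum_zero _ _ ?_
  intro j _
  refine isum_zero _ _ ?_
  intro n _
  refine isum_zero _ _ ?_
  intro m _
  refine isum_zero _ _ ?_
  intro q _
  refine isum_zero _ _ ?_
  intro k _
  -- the deterministic constant of the atom
  set K : ℂ :=
    ((1 / Real.sqrt ((M : ℝ) * (N : ℝ)) : ℝ) : ℂ) *
    (starRingEnd ℂ) ((1 / Real.sqrt ((M : ℝ) * (N : ℝ)) : ℝ) : ℂ) *
    Complex.exp (2 * (Real.pi : ℂ) * Complex.I * (((m : ℕ) : ℂ) - 1) * ((fd q : ℝ) : ℂ) * (Ts : ℂ)) *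
    Complex.exp (2 * (Real.pi : ℂ) * Complex.I * ((k : ℕ) : ℂ) * (Δf : ℂ) * ((Tcp : ℝ) - τ q : ℝ)) *
    Φ q n k *
    (starRingEnd ℂ) (Complex.exp (2 * (Real.pi : ℂ) * Complex.I * ((m' : ℕ) : ℂ) *
      ((fd p : ℝ) : ℂ) * (Ts : ℂ))) *
    (starRingEnd ℂ) (Complex.exp (-(2 * (Real.pi : ℂ) * Complex.I * ((j : ℕ) : ℂ) * (Δf : ℂ) *
      ((τ p : ℝ) : ℂ)))) *
    (starRingEnd ℂ) (Φ p n' j) *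
    Complex.exp (2 * (Real.pi : ℂ) * Complex.I * ((n : ℕ) : ℂ) * (lv : ℂ) / (N : ℂ)) *
    Complex.exp (-(2 * (Real.pi : ℂ) * Complex.I * ((m : ℕ) : ℂ) * (νv : ℂ) / (M : ℂ))) *
    (starRingEnd ℂ) (Complex.exp (2 * (Real.pi : ℂ) * Complex.I * ((n' : ℕ) : ℂ) * (lv : ℂ) /
      (N : ℂ))) *
    (starRingEnd ℂ) (Complex.exp (-(2 * (Real.pi : ℂ) * Complex.I * ((m' : ℕ) : ℂ) * (νv : ℂ) /
      (M : ℂ)))) with hK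
  by_cases hc : (m : ℕ) = (m' : ℕ) + 1
  · -- the factor conj (s (n, m.succ)) is independent of all the others
    obtain ⟨hint, hzero⟩ := master s α hindep hsL4 hsmean hαL2 q p
      (n, m.succ) (k, m.castSucc) (j, m'.succ) (n', m'.succ)
      (hSC m m (Nat.succ_ne_self (m : ℕ)) n k)
      (hSS m m' (by rw [hc]; exact Nat.succ_ne_self (m' : ℕ)) n j)
      (hSS m m' (by rw [hc]; exact Nat.succ_ne_self (m' : ℕ)) n n')
      true false true false
    have heq : ∀ ω : Ω,
        K * (cst true (s (n, m.succ) ω) * (α q ω * (starRingEnd ℂ) (α p ω) *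
          (cst false (s (k, m.castSucc) ω) * (cst true (s (j, m'.succ) ω) *
            cst false (s (n', m'.succ) ω))))) =
        ((1 / Real.sqrt ((M : ℝ) * (N : ℝ)) : ℝ) : ℂ) *
        (starRingEnd ℂ) ((1 / Real.sqrt ((M : ℝ) * (N : ℝ)) : ℝ) : ℂ) *
        ((α q ω * Complex.exp (2 * (Real.pi : ℂ) * Complex.I * (((m : ℕ) : ℂ) - 1) *
            ((fd q : ℝ) : ℂ) * (Ts : ℂ))) *
         (s (k, m.castSucc) ω * Complex.exp (2 * (Real.pi : ℂ) * Complex.I * ((k : ℕ) : ℂ) *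
            (Δf : ℂ) * ((Tcp : ℝ) - τ q : ℝ)) * Φ q n k)) *
        (starRingEnd ℂ) ((α p ω * Complex.exp (2 * (Real.pi : ℂ) * Complex.I * ((m' : ℕ) : ℂ) *
            ((fd p : ℝ) : ℂ) * (Ts : ℂ))) *
         (s (j, m'.succ) ω * Complex.exp (-(2 * (Real.pi : ℂ) * Complex.I * ((j : ℕ) : ℂ) *
            (Δf : ℂ) * ((τ p : ℝ) : ℂ))) * Φ p n' j)) *
        (starRingEnd ℂ) (s (n, m.succ) ω) *
        (starRingEnd ℂ) ((starRingEnd ℂ) (s (n', m'.succ) ω)) *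
        Complex.exp (2 * (Real.pi : ℂ) * Complex.I * ((n : ℕ) : ℂ) * (lv : ℂ) / (N : ℂ)) *
        Complex.exp (-(2 * (Real.pi : ℂ) * Complex.I * ((m : ℕ) : ℂ) * (νv : ℂ) / (M : ℂ))) *
        (starRingEnd ℂ) (Complex.exp (2 * (Real.pi : ℂ) * Complex.I * ((n' : ℕ) : ℂ) *
          (lv : ℂ) / (N : ℂ))) *
        (starRingEnd ℂ) (Complex.exp (-(2 * (Real.pi : ℂ) * Complex.I * ((m' : ℕ) : ℂ) *
          (νv : ℂ) / (M : ℂ)))) := by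
      intro ω
      simp only [hK, cst, if_true, if_false, id_eq, _root_.map_mul, Complex.conj_conj, ite_true,
        ite_false, Bool.false_eq_true]
      ring
    constructor
    · exact (hint.const_mul K).congr (Filter.Eventually.of_forall heq)
    · rw [← integral_congr_ae (Filter.Eventually.of_forall heq), integral_const_mul, hzero,
        mul_zero]
  · -- the factor s (k, m.castSucc) is independent of all the others
    obtain ⟨hint, hzero⟩ := master s α hindep hsL4 hsmean hαL2 q p
      (k, m.castSucc) (n, m.succ) (j, m'.succ) (n', m'.succ)
      (hCS m m (Nat.ne_of_lt (Nat.lt_succ_self (m : ℕ))) k n)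
      (hCS m m' hc k j) (hCS m m' hc k n')
      false true true false
    have heq : ∀ ω : Ω,
        K * (cst false (s (k, m.castSucc) ω) * (α q ω * (starRingEnd ℂ) (α p ω) *
          (cst true (s (n, m.succ) ω) * (cst true (s (j, m'.succ) ω) *
            cst false (s (n', m'.succ) ω))))) =
        ((1 / Real.sqrt ((M : ℝ) * (N : ℝ)) : ℝ) : ℂ) *
        (starRingEnd ℂ) ((1 / Real.sqrt ((M : ℝ) * (N : ℝ)) : ℝ) : ℂ) *
        ((α q ω * Complex.exp (2 * (Real.pi : ℂ) * Complex.I * (((m : ℕ) : ℂ) - 1) *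
            ((fd q : ℝ) : ℂ) * (Ts : ℂ))) *
         (s (k, m.castSucc) ω * Complex.exp (2 * (Real.pi : ℂ) * Complex.I * ((k : ℕ) : ℂ) *
            (Δf : ℂ) * ((Tcp : ℝ) - τ q : ℝ)) * Φ q n k)) *
        (starRingEnd ℂ) ((α p ω * Complex.exp (2 * (Real.pi : ℂ) * Complex.I * ((m' : ℕ) : ℂ) *
            ((fd p : ℝ) : ℂ) * (Ts : ℂ))) *
         (s (j, m'.succ) ω * Complex.exp (-(2 * (Real.pi : ℂ) * Complex.I * ((j : ℕ) : ℂ) *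
            (Δf : ℂ) * ((τ p : ℝ) : ℂ))) * Φ p n' j)) *
        (starRingEnd ℂ) (s (n, m.succ) ω) *
        (starRingEnd ℂ) ((starRingEnd ℂ) (s (n', m'.succ) ω)) *
        Complex.exp (2 * (Real.pi : ℂ) * Complex.I * ((n : ℕ) : ℂ) * (lv : ℂ) / (N : ℂ)) *
        Complex.exp (-(2 * (Real.pi : ℂ) * Complex.I * ((m : ℕ) : ℂ) * (νv : ℂ) / (M : ℂ))) *
        (starRingEnd ℂ) (Complex.exp (2 * (Real.pi : ℂ) * Complex.I * ((n' : ℕ) : ℂ) *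
          (lv : ℂ) / (N : ℂ))) *
        (starRingEnd ℂ) (Complex.exp (-(2 * (Real.pi : ℂ) * Complex.I * ((m' : ℕ) : ℂ) *
          (νv : ℂ) / (M : ℂ)))) := by
      intro ω
      simp only [hK, cst, if_true, if_false, id_eq, _root_.map_mul, Complex.conj_conj, ite_true,
        ite_false, Bool.false_eq_true]
      ring
    constructor
    · exact (hint.const_mul K).congr (Filter.Eventually.of_forall heq)
    · rw [← integral_congr_ae (Filter.Eventually.of_forall heq), integral_const_mul, hzero,
        mul_zero]
end
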